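/- arXiv:1406.4679 — 10 statements merged into one kernel-verified Lean document; each statement's English description precedes it below -/
import Mathlib

section
/- Let k ≥ 2, let A and B be finite relational structures over the same vocabulary, and let d ≥ 0. There exists a CSP-refutation of (A,B) of width at most k−1 and depth at most d if and only if Spoiler has a strategy to win the existential k-pebble game on A and B within d rounds. -/
/-- A relational structure over the vocabulary `ι` (a type of relation symbols)
with universe `V`: each relation symbol is interpreted as a set of tuples
(lists) over `V`. -/
structure RelStruct (ι V : Type) where
  rel : ι → List V → Prop

namespace CSP

variable {ι α β : Type}

/-- A finite set of pairs is a partial map if it is functional. -/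
def Functional (p : Finset (α × β)) : Prop :=
  ∀ ⦃x : α⦄ ⦃y y' : β⦄, (x, y) ∈ p → (x, y') ∈ p → y = y'

/-- `p` is a partial homomorphism from `A` to `B`: it is a partial map, and every
tuple of elements of its domain that belongs to a relation of `A` is mapped
coordinatewise to a tuple of the corresponding relation of `B`. -/
def PartialHom (A : RelStruct ι α) (B : RelStruct ι β) (p : Finset (α × β)) : Prop :=
  Functional p ∧
  ∀ (R : ι) (t : List α) (t' : List β),
    List.Forall₂ (fun x y => (x, y) ∈ p) t t' → A.rel R t → B.rel R t'

/-- A structure is binary if all of its relations consist of tuples of arity at most 2. -/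
def Binary (A : RelStruct ι α) : Prop := ∀ R t, A.rel R t → t.length ≤ 2

/-- `Deriv A B w p d` holds iff the partial map `p` has a CSP-derivation of width at
most `w` and depth at most `d`: axioms are the partial maps that are not partial
homomorphisms (of any depth), and a non-axiom line `p` with `|p| ≤ w` may be derived
from the premises `p'_b ∪ {x ↦ b}` (for all `b ∈ V(B)`), where each `p'_b ⊆ p`,
increasing the depth by one. -/
inductive Deriv [DecidableEq α] [DecidableEq β]
    (A : RelStruct ι α) (B : RelStruct ι β) (w : ℕ) :
    Finset (α × β) → ℕ → Prop
  | ax {p : Finset (α × β)} {d : ℕ} :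
      Functional p → ¬ PartialHom A B p → Deriv A B w p d
  | rule {p : Finset (α × β)} {d : ℕ} (x : α) (prem : β → Finset (α × β)) :
      Functional p → p.card ≤ w →
      (∀ b : β, prem b ⊆ p) →
      (∀ b : β, Deriv A B w (insert (x, b) (prem b)) d) →
      Deriv A B w p (d + 1)

end CSP

namespace CSP

variable {ι α β : Type}

/-- `SpoilerWin A B k p d`: Spoiler has a strategy to win the existential `k`-pebble game
on `A` and `B` within `d` rounds (pebble placements), starting from position `p`.
Either the current position is already not a partial homomorphism, or Spoiler picks up
some pebbles (keeping `p' ⊆ p` with `|p'| < k`), places a free pebble on some `x ∈ V(A)`,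
and wins within the remaining rounds against every answer `b ∈ V(B)` of Duplicator. -/
inductive SpoilerWin [DecidableEq α] [DecidableEq β]
    (A : RelStruct ι α) (B : RelStruct ι β) (k : ℕ) :
    Finset (α × β) → ℕ → Prop
  | win {p : Finset (α × β)} {d : ℕ} :
      ¬ PartialHom A B p → SpoilerWin A B k p d
  | move {p : Finset (α × β)} {d : ℕ} (p' : Finset (α × β)) (x : α) :
      p' ⊆ p → p'.card < k →
      (∀ b : β, SpoilerWin A B k (insert (x, b) p') d) →
      SpoilerWin A B k p (d + 1)

end CSP


namespace CSP

set_option linter.unusedSectionVars false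

variable {ι α β : Type}

section Aux
variable [DecidableEq α] [DecidableEq β] {A : RelStruct ι α} {B : RelStruct ι β}

lemma partialHom_anti {p q : Finset (α × β)} (hpq : p ⊆ q)
    (h : PartialHom A B q) : PartialHom A B p :=
  ⟨fun _ _ _ hy hy' => h.1 (hpq hy) (hpq hy'),
   fun R t t' ht hA => h.2 R t t' (ht.imp fun _ _ hxy => hpq hxy) hA⟩

lemma functional_anti {p q : Finset (α × β)} (hpq : p ⊆ q)
    (h : Functional q) : Functional p :=
  fun _ _ _ hy hy' => h (hpq hy) (hpq hy')

lemma spoilerWin_mono_pos {k : ℕ} {p q : Finset (α × β)} {d : ℕ}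
    (h : SpoilerWin A B k p d) (hpq : p ⊆ q) : SpoilerWin A B k q d := by
  cases h with
  | win hnp => exact .win fun hq => hnp (partialHom_anti hpq hq)
  | move p' x hsub hcard hb => exact .move p' x (hsub.trans hpq) hcard hb

/-- Normalized Spoiler strategies: never replay an occupied variable. -/
inductive SW (A : RelStruct ι α) (B : RelStruct ι β) (k : ℕ) :
    Finset (α × β) → ℕ → Prop
  | win {p : Finset (α × β)} {d : ℕ} :
      ¬ PartialHom A B p → SW A B k p d
  | move {p : Finset (α × β)} {d : ℕ} (p' : Finset (α × β)) (x : α) :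
      p' ⊆ p → p'.card < k → (∀ y, (x, y) ∉ p') →
      (∀ b : β, SW A B k (insert (x, b) p') d) →
      SW A B k p (d + 1)

lemma sw_mono_pos {k : ℕ} {p q : Finset (α × β)} {d : ℕ}
    (h : SW A B k p d) (hpq : p ⊆ q) : SW A B k q d := by
  cases h with
  | win hnp => exact .win fun hq => hnp (partialHom_anti hpq hq)
  | move p' x hsub hcard hfree hb => exact .move p' x (hsub.trans hpq) hcard hfree hb

lemma sw_mono_d {k : ℕ} {p : Finset (α × β)} {d : ℕ}
    (h : SW A B k p d) : SW A B k p (d + 1) := by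
  induction h with
  | win hnp => exact .win hnp
  | move p' x hsub hcard hfree hb ih => exact .move p' x hsub hcard hfree ih

lemma spoilerWin_to_sw {k : ℕ} {p : Finset (α × β)} {d : ℕ}
    (h : SpoilerWin A B k p d) : SW A B k p d := by
  induction h with
  | win hnp => exact .win hnp
  | move p' x hsub hcard hb ih =>
    by_cases hfree : ∀ y, (x, y) ∉ p'
    · exact .move p' x hsub hcard hfree ih
    · push_neg at hfree
      obtain ⟨b₀, hb₀⟩ := hfree
      have h0 := ih b₀
      rw [Finset.insert_eq_self.mpr hb₀] at h0
      exact sw_mono_d (sw_mono_pos h0 hsub)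

lemma deriv_mono_d {w : ℕ} {p : Finset (α × β)} {d : ℕ}
    (h : Deriv A B w p d) : Deriv A B w p (d + 1) := by
  induction h with
  | ax hf hnp => exact .ax hf hnp
  | rule x prem hf hcard hsub hb ih => exact .rule x prem hf hcard hsub ih

lemma deriv_mono_pos {w : ℕ} {r L : Finset (α × β)} {d : ℕ}
    (h : Deriv A B w r d) (hrL : r ⊆ L) (hL : Functional L) (hcard : L.card ≤ w) :
    Deriv A B w L d := by
  cases h with
  | ax hf hnp => exact .ax hL fun hph => hnp (partialHom_anti hrL hph)
  | rule x prem hf hc hsub hb => exact .rule x prem hL hcard (fun b => (hsub b).trans hrL) hb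

lemma deriv_to_spoilerWin {k : ℕ} (hk : 1 ≤ k) {p : Finset (α × β)} {d : ℕ}
    (h : Deriv A B (k - 1) p d) : SpoilerWin A B k p d := by
  induction h with
  | ax hf hnp => exact .win hnp
  | rule x prem hf hcard hsub hb ih =>
    refine .move _ x subset_rfl (lt_of_le_of_lt hcard (Nat.sub_lt hk one_pos)) ?_
    exact fun b => spoilerWin_mono_pos (ih b) (Finset.insert_subset_insert _ (hsub b))

lemma sw_to_deriv {k : ℕ} {q : Finset (α × β)} {d : ℕ}
    (h : SW A B k q d) : Functional q →
    ∃ r, r ⊆ q ∧ Deriv A B (k - 1) r d ∧ (r.card ≤ k - 1 ∨ r = q) := by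
  induction h with
  | win hnp =>
    intro hq
    exact ⟨_, subset_rfl, .ax hq hnp, Or.inr rfl⟩
  | @move P D p'' x hsub hcard hfree hb ih =>
    intro hq
    have hp'' : Functional p'' := functional_anti hsub hq
    have hp''card : p''.card ≤ k - 1 := Nat.le_sub_one_of_lt hcard
    have hchild : ∀ b : β, Functional (insert (x, b) p'') := by
      intro b a y y' hy hy'
      rcases Finset.mem_insert.1 hy with h1 | h1 <;>
        rcases Finset.mem_insert.1 hy' with h2 | h2
      · rw [Prod.mk.injEq] at h1 h2; exact h1.2.trans h2.2.symm
      · exact absurd (Prod.mk.injEq .. ▸ h1 : a = x ∧ y = b).1 (by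
          rintro rfl; exact absurd h2 (hfree y'))
      · exact absurd (Prod.mk.injEq .. ▸ h2 : a = x ∧ y' = b).1 (by
          rintro rfl; exact absurd h1 (hfree y))
      · exact hp'' h1 h2
    choose r hrsub hrderiv hrcase using fun b => ih b (hchild b)
    by_cases hsc : ∃ b, r b = p''
    · obtain ⟨b, hbeq⟩ := hsc
      refine ⟨p'', hsub, ?_, Or.inl hp''card⟩
      exact deriv_mono_d (hbeq ▸ hrderiv b)
    · push_neg at hsc
      have key : ∀ b : β, ∃ s, s ⊆ p'' ∧ Deriv A B (k - 1) (insert (x, b) s) D := by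
        intro b
        rcases hrcase b with hle | heq
        · by_cases hmem : (x, b) ∈ r b
          · refine ⟨(r b).erase (x, b), ?_, ?_⟩
            · intro t ht
              have := hrsub b (Finset.mem_of_mem_erase ht)
              rcases Finset.mem_insert.1 this with h1 | h1
              · exact absurd h1 (Finset.ne_of_mem_erase ht)
              · exact h1
            · rw [Finset.insert_erase hmem]; exact hrderiv b
          · have hrp : r b ⊆ p'' := by
              intro t ht
              rcases Finset.mem_insert.1 (hrsub b ht) with h1 | h1
              · exact absurd (h1 ▸ ht) hmem
              · exact h1
            have hss : r b ⊂ p'' := ⟨hrp, fun h => hsc b (subset_antisymm hrp h)⟩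
            refine ⟨r b, hrp, ?_⟩
            refine deriv_mono_pos (hrderiv b) (Finset.subset_insert _ _)
              (functional_anti (Finset.insert_subset_insert _ hrp) (hchild b)) ?_
            calc (insert (x, b) (r b)).card ≤ (r b).card + 1 := Finset.card_insert_le _ _
              _ ≤ p''.card := Finset.card_lt_card hss
              _ ≤ k - 1 := hp''card
        · refine ⟨p'', subset_rfl, ?_⟩
          exact heq ▸ hrderiv b
      choose s hssub hsderiv using key
      exact ⟨p'', hsub, .rule x s hp'' hp''card hssub hsderiv, Or.inl hp''card⟩

end Aux


end CSP

/-- there is a CSP-refutation of `(A,B)` of width at most `k-1` and depth at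
most `d` iff Spoiler has a strategy to win the existential `k`-pebble game on `A` and `B`
within `d` rounds. -/
theorem csp_refutation_iff_spoiler_win
    {ι α β : Type} [DecidableEq α] [DecidableEq β] [Fintype α] [Fintype β]
    (k d : ℕ) (hk : 2 ≤ k) (A : RelStruct ι α) (B : RelStruct ι β) :
    CSP.Deriv A B (k - 1) (∅ : Finset (α × β)) d ↔
      CSP.SpoilerWin A B k (∅ : Finset (α × β)) d := by

  constructor
  · intro h
    exact CSP.deriv_to_spoilerWin (le_trans one_le_two hk) h
  · intro h
    have hsw := CSP.spoilerWin_to_sw h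
    have hfun : CSP.Functional (∅ : Finset (α × β)) := by
      intro x y y' hy
      exact absurd hy (Finset.notMem_empty _)
    obtain ⟨r, hr, hd, -⟩ := CSP.sw_to_deriv hsw hfun
    rwa [Finset.subset_empty.mp hr] at hd
end

section
/- Let k ≥ 2, let A and B be finite relational structures over the same vocabulary, and let p be a partial map from V(A) to V(B) with |p| ≤ k. If Spoiler has a strategy to win the existential k-pebble game on A and B within i rounds starting from the position p, then some subset p' ⊆ p has a CSP-derivation of width at most k−1 and depth at most i. -/
theorem CSP.Deriv.mono {ι α β : Type} [DecidableEq α] [DecidableEq β]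
    {A : RelStruct ι α} {B : RelStruct ι β} {w : ℕ} {p : Finset (α × β)} {d d' : ℕ}
    (h : CSP.Deriv A B w p d) (hd : d ≤ d') : CSP.Deriv A B w p d' := by
  induction h generalizing d' with
  | ax h1 h2 => exact CSP.Deriv.ax h1 h2
  | rule x prem h1 h2 h3 h4 ih =>
    cases d' with
    | zero => omega
    | succ e =>
      exact CSP.Deriv.rule x prem h1 h2 h3 (fun b => ih b (Nat.succ_le_succ_iff.mp hd))

/-- if Spoiler can win the existential `k`-pebble game within `i` rounds
starting from the position `p` (a partial map with `|p| ≤ k`), then some subset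
`p' ⊆ p` has a CSP-derivation of width at most `k-1` and depth at most `i`. -/
theorem spoiler_win_to_csp_derivation
    {ι α β : Type} [DecidableEq α] [DecidableEq β] [Fintype α] [Fintype β]
    (k i : ℕ) (hk : 2 ≤ k) (A : RelStruct ι α) (B : RelStruct ι β)
    (p : Finset (α × β)) (hfun : CSP.Functional p) (hcard : p.card ≤ k)
    (hwin : CSP.SpoilerWin A B k p i) :
    ∃ p' ⊆ p, CSP.Deriv A B (k - 1) p' i := by
  revert hfun hcard
  induction hwin with
  | @win p d hnp =>
    intro hfun _
    exact ⟨p, Finset.Subset.refl p, CSP.Deriv.ax hfun hnp⟩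
  | @move p d p' x hsub hcard' h ih =>
    intro hfun hcard
    have hfun' : CSP.Functional p' := fun _ _ _ h1 h2 => hfun (hsub h1) (hsub h2)
    by_cases hx : ∃ b', (x, b') ∈ p'
    · obtain ⟨b', hb'⟩ := hx
      have heq : insert (x, b') p' = p' := Finset.insert_eq_self.mpr hb'
      obtain ⟨q, hq, hder⟩ := ih b' (by rw [heq]; exact hfun')
        (by rw [heq]; exact le_trans (Finset.card_le_card hsub) hcard)
      rw [heq] at hq
      exact ⟨q, hq.trans hsub, hder.mono (Nat.le_succ d)⟩
    · push_neg at hx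
      have hFb : ∀ b, CSP.Functional (insert (x, b) p') := by
        intro b z y y' h1 h2
        rcases Finset.mem_insert.mp h1 with h1 | h1 <;>
          rcases Finset.mem_insert.mp h2 with h2 | h2
        · simp only [Prod.mk.injEq] at h1 h2; rw [h1.2, h2.2]
        · simp only [Prod.mk.injEq] at h1; exact absurd h2 (h1.1 ▸ hx y')
        · simp only [Prod.mk.injEq] at h2; exact absurd h1 (h2.1 ▸ hx y)
        · exact hfun' h1 h2
      have hCb : ∀ b : β, (insert (x, b) p').card ≤ k := fun b =>
        le_trans (Finset.card_insert_le _ _) (Nat.succ_le_of_lt hcard')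
      choose q hq hder using fun b => ih b (hFb b) (hCb b)
      by_cases hall : ∀ b, (x, b) ∈ q b
      · refine ⟨p', hsub, CSP.Deriv.rule x (fun b => (q b).erase (x, b)) hfun'
          (Nat.le_pred_of_lt hcard') (fun b e he => ?_) (fun b => ?_)⟩
        · have h1 := Finset.ne_of_mem_erase he
          have h2 := hq b (Finset.mem_of_mem_erase he)
          rcases Finset.mem_insert.mp h2 with h2 | h2
          · exact absurd h2 h1
          · exact h2
        · rw [Finset.insert_erase (hall b)]; exact hder b
      · push_neg at hall
        obtain ⟨b, hb⟩ := hall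
        have hqsub : q b ⊆ p' := by
          intro e he
          rcases Finset.mem_insert.mp (hq b he) with h2 | h2
          · exact absurd (h2 ▸ he) hb
          · exact h2
        exact ⟨q b, hqsub.trans hsub, (hder b).mono (Nat.le_succ d)⟩
end

section
/- Let k ≥ 2, let A and B be finite relational structures over the same vocabulary, and let p be a partial map from V(A) to V(B) with |p| ≤ k. If p has a CSP-derivation of width at most k−1 and depth at most i, then Spoiler has a strategy to win the existential k-pebble game on A and B within i rounds starting from the position p. -/
namespace CSP

theorem notPartialHom_superset {A : RelStruct ι α} {B : RelStruct ι β}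
    {q p : Finset (α × β)} (hq : q ⊆ p) (h : ¬ PartialHom A B q) :
    ¬ PartialHom A B p := by
  rintro ⟨hf, hr⟩
  exact h ⟨fun x y y' h1 h2 => hf (hq h1) (hq h2),
    fun R t t' hft => hr R t t' (List.Forall₂.imp (fun a b hab => hq hab) hft)⟩

theorem SpoilerWin.mono [DecidableEq α] [DecidableEq β]
    {A : RelStruct ι α} {B : RelStruct ι β} {k : ℕ} {q : Finset (α × β)} {d : ℕ}
    (h : SpoilerWin A B k q d) :
    ∀ {p : Finset (α × β)}, q ⊆ p → SpoilerWin A B k p d := by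
  induction h with
  | win hnp => exact fun hqp => .win (notPartialHom_superset hqp hnp)
  | move p' x hsub hcard hwins ih =>
      exact fun hqp => .move p' x (hsub.trans hqp) hcard hwins

end CSP

/-- if the partial map `p` (with `|p| ≤ k`) has a CSP-derivation of width
at most `k-1` and depth at most `i`, then Spoiler has a strategy to win the existential
`k`-pebble game on `A` and `B` within `i` rounds starting from the position `p`. -/
theorem csp_derivation_to_spoiler_win
    {ι α β : Type} [DecidableEq α] [DecidableEq β] [Fintype α] [Fintype β]
    (k i : ℕ) (hk : 2 ≤ k) (A : RelStruct ι α) (B : RelStruct ι β)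
    (p : Finset (α × β)) (hfun : CSP.Functional p) (hcard : p.card ≤ k)
    (hderiv : CSP.Deriv A B (k - 1) p i) :
    CSP.SpoilerWin A B k p i := by
  clear hfun hcard
  induction hderiv with
  | ax hf hnp => exact .win hnp
  | rule x prem hf hcard hsub hd ih =>
      refine .move _ x (le_refl _) (lt_of_le_of_lt hcard (by omega)) fun b =>
        (ih b).mono (Finset.insert_subset_insert _ (hsub b))
end

section
/- Let K ≥ 2 and let A and B be finite relational structures over the same vocabulary. If H_1, …, H_l is a sequence of critical strategies for Duplicator in the existential K-pebble game on A and B such that for every i < l and every critical position p ∈ crit(H_i) there is some j ≤ i+1 with p ∈ H_j ∖ crit(H_j), then Duplicator wins the l-round existential K-pebble game on A and B. -/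
namespace CSP

variable {ι α β : Type}

/-- `H` together with the set `crit ⊆ H` of critical positions is a critical strategy for
Duplicator in the existential `K`-pebble game on `A` and `B`. -/
structure IsCriticalStrategy [DecidableEq α] [DecidableEq β]
    (A : RelStruct ι α) (B : RelStruct ι β) (K : ℕ)
    (H crit : Set (Finset (α × β))) : Prop where
  nonempty : H.Nonempty
  crit_subset : crit ⊆ H
  isHom : ∀ p ∈ H, PartialHom A B p
  crit_card : ∀ p ∈ crit, p.card = K - 1
  downward : ∀ p ∈ H, ∀ q ⊆ p, q ∈ H
  extend : ∀ g ∈ H, g ∉ crit → g.card < K → ∀ x : α, ∃ b : β, insert (x, b) g ∈ H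

/-- `DupSurvive A B K l p`: Duplicator has a strategy guaranteeing that, starting from
position `p`, Spoiler does not win the existential `K`-pebble game within `l` further
pebble placements: the current position is a partial homomorphism and, whenever Spoiler
picks up pebbles and places a free pebble on `x`, Duplicator can answer with some `b`
and survive the remaining rounds. -/
def DupSurvive [DecidableEq α] [DecidableEq β]
    (A : RelStruct ι α) (B : RelStruct ι β) (K : ℕ) :
    ℕ → Finset (α × β) → Prop
  | 0, p => PartialHom A B p
  | l + 1, p => PartialHom A B p ∧
      ∀ p' ⊆ p, p'.card < K → ∀ x : α, ∃ b : β, DupSurvive A B K l (insert (x, b) p')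

end CSP

/-- if `H_1, …, H_l` is a sequence of critical strategies for Duplicator in
the existential `K`-pebble game on `A` and `B` such that for every `i < l` each critical
position of `H_i` is a non-critical position of some `H_j` with `j ≤ i+1`, then Duplicator
wins the `l`-round existential `K`-pebble game on `A` and `B`. -/
theorem critical_strategy_sequence_duplicator_wins
    {ι α β : Type} [DecidableEq α] [DecidableEq β] [Fintype α] [Fintype β]
    (K l : ℕ) (hK : 2 ≤ K) (hl : 1 ≤ l)
    (A : RelStruct ι α) (B : RelStruct ι β)
    (H crit : ℕ → Set (Finset (α × β)))
    (hstrat : ∀ i, 1 ≤ i → i ≤ l → CSP.IsCriticalStrategy A B K (H i) (crit i))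
    (hseq : ∀ i, 1 ≤ i → i < l → ∀ p ∈ crit i,
      ∃ j, 1 ≤ j ∧ j ≤ i + 1 ∧ p ∈ H j ∧ p ∉ crit j) :
    CSP.DupSurvive A B K l (∅ : Finset (α × β)) := by
  have aux : ∀ m i p, 1 ≤ i → i + m ≤ l → p ∈ H i → CSP.DupSurvive A B K m p := by
    intro m
    induction m with
    | zero =>
      intro i p hi hil hp
      exact (hstrat i hi (by omega)).isHom p hp
    | succ m ih =>
      intro i p hi hil hp
      refine ⟨(hstrat i hi (by omega)).isHom p hp, ?_⟩
      intro p' hp' hcard x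
      have hp'H : p' ∈ H i := (hstrat i hi (by omega)).downward p hp p' hp'
      by_cases hc : p' ∈ crit i
      · obtain ⟨j, hj1, hj2, hjH, hjc⟩ := hseq i hi (by omega) p' hc
        obtain ⟨b, hb⟩ := (hstrat j hj1 (by omega)).extend p' hjH hjc hcard x
        exact ⟨b, ih j _ hj1 (by omega) hb⟩
      · obtain ⟨b, hb⟩ := (hstrat i hi (by omega)).extend p' hp'H hc hcard x
        exact ⟨b, ih i _ hi (by omega) hb⟩
  obtain ⟨m, rfl⟩ : ∃ m, l = m + 1 := ⟨l - 1, by omega⟩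
  have h1 := hstrat 1 le_rfl (by omega)
  obtain ⟨q, hq⟩ := h1.nonempty
  have hempty : (∅ : Finset (α × β)) ∈ H 1 := h1.downward q hq ∅ (Finset.empty_subset q)
  refine ⟨h1.isHom ∅ hempty, ?_⟩
  intro p' hp' hcard x
  have hpe : p' = ∅ := Finset.subset_empty.mp hp'
  subst hpe
  have hnc : (∅ : Finset (α × β)) ∉ crit 1 := by
    intro h
    have := h1.crit_card ∅ h
    simp only [Finset.card_empty] at this
    omega
  obtain ⟨b, hb⟩ := h1.extend ∅ hempty hnc hcard x
  exact ⟨b, aux m 1 _ le_rfl (by omega) hb⟩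
end

section
/- Let k ≥ 2 and n, m ≥ 1. In the existential (k+1)-pebble game on the winning gadget WIN (with Spoiler playing on WIN_S and Duplicator on WIN_D), Spoiler wins starting from the position 'q_win on x', i.e. from the pebble position {(x^i_n, x^i_m) : i ∈ [k]}. -/
/-- A vertex-colored (finite simple) graph on vertex type `V` with colors in `C`. -/
structure ColoredGraph (V : Type) (C : Type) where
  graph : SimpleGraph V
  color : V → C

namespace PebbleCG

variable {α β C : Type}

/-- A finite set of pairs is a partial map if it is functional. -/
def Functional (p : Finset (α × β)) : Prop :=
  ∀ ⦃x : α⦄ ⦃y y' : β⦄, (x, y) ∈ p → (x, y') ∈ p → y = y'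

/-- `p` is a partial homomorphism between the vertex-colored graphs `A` and `B`:
a partial map that preserves colors and maps edges to edges. -/
def PartialHom (A : ColoredGraph α C) (B : ColoredGraph β C) (p : Finset (α × β)) : Prop :=
  Functional p ∧
  (∀ ⦃x y⦄, (x, y) ∈ p → B.color y = A.color x) ∧
  (∀ ⦃x y x' y'⦄, (x, y) ∈ p → (x', y') ∈ p → A.graph.Adj x x' → B.graph.Adj y y')

/-- Spoiler wins the existential `K`-pebble game played on the vertex sets `S` of `A`
and `D` of `B`, starting from position `p` (after finitely many rounds): either the
position is already not a partial homomorphism, or Spoiler can pick up pebbles and place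
a free pebble on some `x ∈ S` so that he wins against every answer `b ∈ D`. -/
inductive SpoilerWins [DecidableEq α] [DecidableEq β]
    (A : ColoredGraph α C) (B : ColoredGraph β C)
    (S : Set α) (D : Set β) (K : ℕ) : Finset (α × β) → Prop
  | win {p : Finset (α × β)} :
      ¬ PartialHom A B p → SpoilerWins A B S D K p
  | move {p : Finset (α × β)} (p' : Finset (α × β)) (x : α) :
      p' ⊆ p → p'.card < K → x ∈ S →
      (∀ b ∈ D, SpoilerWins A B S D K (insert (x, b) p')) →
      SpoilerWins A B S D K p

/-- `SpoilerReach A B S D K p q`: starting from position `p`, Spoiler has a strategy in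
the existential `K`-pebble game (played on the vertex sets `S` and `D`) guaranteeing
that after finitely many rounds he has either won or reached exactly the position `q`. -/
inductive SpoilerReach [DecidableEq α] [DecidableEq β]
    (A : ColoredGraph α C) (B : ColoredGraph β C)
    (S : Set α) (D : Set β) (K : ℕ) : Finset (α × β) → Finset (α × β) → Prop
  | refl {p : Finset (α × β)} : SpoilerReach A B S D K p p
  | win {p q : Finset (α × β)} :
      ¬ PartialHom A B p → SpoilerReach A B S D K p q
  | move {p q : Finset (α × β)} (p' : Finset (α × β)) (x : α) :
      p' ⊆ p → p'.card < K → x ∈ S →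
      (∀ b ∈ D, SpoilerReach A B S D K (insert (x, b) p') q) →
      SpoilerReach A B S D K p q

/-- `H` together with the set `crit ⊆ H` of critical positions is a critical strategy
for Duplicator in the existential `K`-pebble game on the vertex-colored graphs `A`
(restricted to `S`) and `B` (restricted to `D`).  If `crit = ∅` it is a winning
strategy. -/
structure IsCriticalStrategy [DecidableEq α] [DecidableEq β]
    (A : ColoredGraph α C) (B : ColoredGraph β C)
    (S : Set α) (D : Set β) (K : ℕ)
    (H crit : Set (Finset (α × β))) : Prop where
  nonempty : H.Nonempty
  crit_subset : crit ⊆ H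
  mem_SD : ∀ p ∈ H, ∀ z ∈ p, Prod.fst z ∈ S ∧ Prod.snd z ∈ D
  isHom : ∀ p ∈ H, PartialHom A B p
  crit_card : ∀ p ∈ crit, p.card = K - 1
  downward : ∀ p ∈ H, ∀ q ⊆ p, q ∈ H
  extend : ∀ g ∈ H, g ∉ crit → g.card < K → ∀ x ∈ S, ∃ b ∈ D, insert (x, b) g ∈ H

/-- The family `H` of positions has boundary function `f` on the (Spoiler-side) boundary
`bS`: every position of `H` agrees with `f` on boundary vertices in its domain. -/
def HasBoundaryFun (H : Set (Finset (α × β))) (bS : Set α) (f : α → β) : Prop :=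
  ∀ h ∈ H, ∀ z ∈ bS, ∀ y : β, (z, y) ∈ h → y = f z

end PebbleCG

/-! ### The winning gadget `WIN` (parameters `k`, `n`, `m`).

Spoiler's side has vertices `(i, j)` with `i ∈ [1,k]`, `j ∈ [1,n]` (the input
`x`-vertices `x^i_j`) and the extra vertex `a = (0, 0)`, adjacent to `x^i_n` for all `i`.
Duplicator's side has vertices `(i, j)` with `i ∈ [1,k]`, `0 ≤ j ≤ m` (the `x`-vertices
`x^i_j`, where `x^i_0` is the special vertex) and extra vertices `aᵢ = (0, i)` for
`i ∈ [1,k]`, where `aᵢ` is adjacent to every input vertex except `x^i_m`.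
Vertex `(i, j)` is colored `i`; thus the `x`-block `i` has color `i` and the extra
vertices share the new color `0`. -/

/-- Spoiler's side of the winning gadget. -/
def winS (k n : ℕ) : ColoredGraph (ℕ × ℕ) ℕ where
  graph := SimpleGraph.fromRel (fun u v =>
    u = (0, 0) ∧ 1 ≤ v.1 ∧ v.1 ≤ k ∧ v.2 = n)
  color := fun v => v.1

/-- Duplicator's side of the winning gadget. -/
def winD (k m : ℕ) : ColoredGraph (ℕ × ℕ) ℕ where
  graph := SimpleGraph.fromRel (fun u v =>
    u.1 = 0 ∧ 1 ≤ u.2 ∧ u.2 ≤ k ∧ 1 ≤ v.1 ∧ v.1 ≤ k ∧ v.2 ≤ m ∧ ¬(v.1 = u.2 ∧ v.2 = m))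
  color := fun v => v.1

/-- The vertex set of Spoiler's side of the winning gadget. -/
def winSetS (k n : ℕ) : Set (ℕ × ℕ) :=
  {v | v = (0, 0) ∨ (1 ≤ v.1 ∧ v.1 ≤ k ∧ 1 ≤ v.2 ∧ v.2 ≤ n)}

/-- The vertex set of Duplicator's side of the winning gadget. -/
def winSetD (k m : ℕ) : Set (ℕ × ℕ) :=
  {v | (v.1 = 0 ∧ 1 ≤ v.2 ∧ v.2 ≤ k) ∨ (1 ≤ v.1 ∧ v.1 ≤ k ∧ v.2 ≤ m)}

/-- Spoiler wins the existential `(k+1)`-pebble game on the winning gadget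
`WIN` starting from the position `q_win on x = {(x^i_n, x^i_m) : i ∈ [k]}`. -/
theorem spoiler_wins_on_winning_gadget (k n m : ℕ) (hk : 2 ≤ k) (hn : 1 ≤ n) (hm : 1 ≤ m) :
    PebbleCG.SpoilerWins (winS k n) (winD k m) (winSetS k n) (winSetD k m) (k + 1)
      ((Finset.Icc 1 k).image fun i => ((i, n), (i, m))) := by
  set p : Finset ((ℕ × ℕ) × (ℕ × ℕ)) :=
    (Finset.Icc 1 k).image fun i => ((i, n), (i, m)) with hp
  have hcard : p.card ≤ k := by
    calc p.card ≤ (Finset.Icc 1 k).card := Finset.card_image_le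
    _ = k := by simp
  refine PebbleCG.SpoilerWins.move p (0, 0) (Finset.Subset.refl _)
    (lt_of_le_of_lt hcard (Nat.lt_succ_self k)) (Or.inl rfl) ?_
  intro b hb
  apply PebbleCG.SpoilerWins.win
  rintro ⟨-, hcol, hadj⟩
  have hmem0 : ((0, 0), b) ∈ insert ((0, 0), b) p := Finset.mem_insert_self _ _
  rcases hb with ⟨hb1, hb2, hb3⟩ | ⟨hb1, -, -⟩
  · -- b = (0, i) with 1 ≤ i ≤ k
    set i := b.2
    have hbeq : b = (0, i) := by
      exact Prod.ext hb1 rfl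
    have hmemi : (((i, n) : ℕ × ℕ), ((i, m) : ℕ × ℕ)) ∈ insert ((0, 0), b) p := by
      apply Finset.mem_insert_of_mem
      rw [hp]
      exact Finset.mem_image_of_mem _ (Finset.mem_Icc.2 ⟨hb2, hb3⟩)
    have hadjS : (winS k n).graph.Adj (0, 0) (i, n) := by
      refine SimpleGraph.fromRel_adj .. |>.2 ⟨?_, Or.inl ⟨rfl, hb2, hb3, rfl⟩⟩
      intro h
      have : (0 : ℕ) = i := congrArg Prod.fst h
      omega
    have hadjD := hadj hmem0 hmemi hadjS
    rw [hbeq] at hadjD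
    rcases (SimpleGraph.fromRel_adj ..).1 hadjD with ⟨-, ⟨-, -, -, -, -, -, h⟩ | ⟨h1, -⟩⟩
    · exact h ⟨rfl, rfl⟩
    · exact absurd h1 (by omega)
  · -- b.1 ≥ 1 : wrong color
    have := hcol hmem0
    simp only [winS, winD] at this
    omega
end

section
/- Let k ≥ 2, n, m ≥ 1, and let q = (a,b,T) be any configuration with q ≠ q_win. Then Duplicator has a winning strategy in the existential (k+1)-pebble game on the winning gadget WIN whose boundary function on the input block is h^x_q. -/
open Classical in
/-- The map `h^x_q` for the configuration `q = (a, b, T)` on an `x`-block: it sends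
`x^i_{a(i)}` to `x^i_{b(i)}` for `i ∉ T`, and every other `x^i_j` to `x^i_0`. -/
noncomputable def hxWin (a b : ℕ → ℕ) (T : Set ℕ) : ℕ × ℕ → ℕ × ℕ :=
  fun v => if v.2 = a v.1 ∧ v.1 ∉ T then (v.1, b v.1) else (v.1, 0)

/-- for every configuration `q = (a, b, T)` with `q ≠ q_win`, Duplicator
has a winning strategy in the existential `(k+1)`-pebble game on the winning gadget
`WIN` whose boundary function on the input block is `h^x_q`. -/
theorem duplicator_wins_on_winning_gadget (k n m : ℕ) (hk : 2 ≤ k) (hn : 1 ≤ n) (hm : 1 ≤ m)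
    (a b : ℕ → ℕ) (T : Set ℕ) (hT : T ⊆ Set.Icc 1 k)
    (hwf : ∀ i, 1 ≤ i → i ≤ k → 1 ≤ a i ∧ a i ≤ n ∧ 1 ≤ b i ∧ b i ≤ m)
    (hne : ∃ i, 1 ≤ i ∧ i ≤ k ∧ (a i ≠ n ∨ b i ≠ m ∨ i ∈ T)) :
    ∃ H : Set (Finset ((ℕ × ℕ) × ℕ × ℕ)),
      PebbleCG.IsCriticalStrategy (winS k n) (winD k m) (winSetS k n) (winSetD k m)
        (k + 1) H ∅ ∧
      PebbleCG.HasBoundaryFun H {v : ℕ × ℕ | 1 ≤ v.1 ∧ v.1 ≤ k ∧ 1 ≤ v.2 ∧ v.2 ≤ n}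
        (hxWin a b T) := by
  classical
  obtain ⟨i0, hi01, hi0k, hi0c⟩ := hne
  set F : ℕ × ℕ → ℕ × ℕ :=
    fun v => if v = (0, 0) then (0, i0) else hxWin a b T v with hFdef
  -- basic facts about F
  have hFfst : ∀ v : ℕ × ℕ, (F v).1 = v.1 := by
    intro v
    by_cases h : v = (0, 0)
    · simp [hFdef, h]
    · simp only [hFdef, h, if_false, hxWin]
      split <;> rfl
  have hFD : ∀ v ∈ winSetS k n, F v ∈ winSetD k m := by
    intro v hv
    rcases hv with h | ⟨h1, h2, h3, h4⟩
    · simp [hFdef, h, winSetD, hi01, hi0k]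
    · have hv0 : v ≠ (0, 0) := by
        intro h; rw [h] at h1; exact absurd h1 (by norm_num)
      simp only [hFdef, hv0, if_false, hxWin]
      split
      · exact Or.inr ⟨h1, h2, (hwf v.1 h1 h2).2.2.2⟩
      · exact Or.inr ⟨h1, h2, Nat.zero_le m⟩
  -- key fact for the extra vertex
  have hkey : ∀ i : ℕ, 1 ≤ i → i ≤ k →
      (hxWin a b T (i, n)).2 ≤ m ∧ ¬((hxWin a b T (i, n)).1 = i0 ∧ (hxWin a b T (i, n)).2 = m) := by
    intro i h1 h2
    have hfst : (hxWin a b T (i, n)).1 = i := by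
      simp only [hxWin]; split <;> rfl
    constructor
    · simp only [hxWin]
      split
      · exact (hwf i h1 h2).2.2.2
      · exact Nat.zero_le m
    · rintro ⟨hc1, hc2⟩
      rw [hfst] at hc1
      subst hc1
      rcases hi0c with h | h | h
      · simp only [hxWin] at hc2
        rw [if_neg (by simp; intro hna; exact absurd hna.symm h)] at hc2
        simp only at hc2
        omega
      · simp only [hxWin] at hc2
        split at hc2
        · exact h hc2
        · simp only at hc2
          omega
      · simp only [hxWin] at hc2
        rw [if_neg (by simp [h])] at hc2
        simp only at hc2
        omega
  refine ⟨{ p | ∀ z ∈ p, z.1 ∈ winSetS k n ∧ z.2 = F z.1 }, ?_, ?_⟩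
  · constructor
    · exact ⟨∅, by simp⟩
    · exact Set.empty_subset _
    · intro p hp z hz
      obtain ⟨h1, h2⟩ := hp z hz
      exact ⟨h1, h2 ▸ hFD _ h1⟩
    · -- isHom
      intro p hp
      refine ⟨?_, ?_, ?_⟩
      · intro x y y' hxy hxy'
        have h1 := (hp _ hxy).2
        have h2 := (hp _ hxy').2
        simp only at h1 h2
        rw [h1, h2]
      · intro x y hxy
        have h1 := (hp _ hxy).2
        simp only at h1
        subst h1
        show (F x).1 = x.1
        exact hFfst x
      · intro x y x' y' hxy hxy' hadj
        have hy := (hp _ hxy).2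
        have hy' := (hp _ hxy').2
        simp only at hy hy'
        subst hy; subst hy'
        rw [winS, SimpleGraph.fromRel_adj] at hadj
        -- wlog: one of x, x' is (0,0)
        have key : ∀ u u' : ℕ × ℕ, u = (0, 0) → 1 ≤ u'.1 → u'.1 ≤ k → u'.2 = n →
            (winD k m).graph.Adj (F u) (F u') := by
          intro u u' hu h1 h2 h3
          have hu'0 : u' ≠ (0, 0) := by
            intro h; rw [h] at h1; exact absurd h1 (by norm_num)
          have hu'eq : u' = (u'.1, n) := by rw [← h3]
          subst hu
          simp only [hFdef, if_pos rfl, hu'0, if_false]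
          rw [winD, SimpleGraph.fromRel_adj]
          have hfst' : (hxWin a b T u').1 = u'.1 := by
            simp only [hxWin]; split <;> rfl
          have hkk := hkey u'.1 h1 h2
          rw [← hu'eq] at hkk
          obtain ⟨hle, hne'⟩ := hkk
          constructor
          · intro hcon
            have := congrArg Prod.fst hcon
            simp only [hfst'] at this
            rw [← this] at h1; exact absurd h1 (by norm_num)
          · left
            refine ⟨rfl, hi01, hi0k, ?_, ?_, hle, ?_⟩
            · rw [hfst']; exact h1
            · rw [hfst']; exact h2
            · rw [hfst'] at hne' ⊢; exact hne'
        rcases hadj.2 with ⟨hu, h1, h2, h3⟩ | ⟨hu, h1, h2, h3⟩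
        · exact key x x' hu h1 h2 h3
        · exact ((winD k m).graph.adj_symm (key x' x hu h1 h2 h3))
    · intro p hp
      exact absurd hp (Set.notMem_empty p)
    · intro p hp q hq z hz
      exact hp z (hq hz)
    · intro g hg _ _ x hx
      refine ⟨F x, hFD x hx, ?_⟩
      intro z hz
      rcases Finset.mem_insert.mp hz with h | h
      · subst h; exact ⟨hx, rfl⟩
      · exact hg z h
  · intro h hh z hz y hy
    have := (hh _ hy).2
    simp only at this
    subst this
    have hz0 : z ≠ (0, 0) := by
      intro h'; rw [h'] at hz; exact absurd hz.1 (by norm_num)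
    show (if z = (0, 0) then ((0 : ℕ), i0) else hxWin a b T z) = hxWin a b T z
    rw [if_neg hz0]
end

section
/- Let k ≥ 2, n, m ≥ 1, ℓ ∈ [k], and let q be a configuration to which the right increment gadget INC^right_ℓ is applicable. Then in the existential (k+1)-pebble game on INC^right_ℓ, Spoiler can reach the position 'q^+ on y' (on the output block) from the position 'q on x' (on the input block). -/
/-! ### Blocks of vertices with two labels (input `x` = label `0`, output `y` = label `1`).

A vertex `(lab, i, j)` is the vertex `x^i_j` (if `lab = 0`) or `y^i_j` (if `lab = 1`).
On Spoiler's side `i ∈ [1,k]`, `j ∈ [1,n]`; on Duplicator's side `i ∈ [1,k]`,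
`0 ≤ j ≤ m` (with `j = 0` the special vertex).  The color of `(lab, i, j)` is
`(lab, i)`, so blocks are colored per block, matched between the two sides. -/

/-- Spoiler's vertex set: input and output blocks. -/
def blkSetS (k n : ℕ) : Set (ℕ × ℕ × ℕ) :=
  {v | v.1 ≤ 1 ∧ 1 ≤ v.2.1 ∧ v.2.1 ≤ k ∧ 1 ≤ v.2.2 ∧ v.2.2 ≤ n}

/-- Duplicator's vertex set: input and output blocks (including the special vertices). -/
def blkSetD (k m : ℕ) : Set (ℕ × ℕ × ℕ) :=
  {v | v.1 ≤ 1 ∧ 1 ≤ v.2.1 ∧ v.2.1 ≤ k ∧ v.2.2 ≤ m}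

/-- The Spoiler-side input boundary: the vertices `x^i_j`, `i ∈ [1,k]`, `j ∈ [1,n]`. -/
def blkBdryX (k n : ℕ) : Set (ℕ × ℕ × ℕ) :=
  {v | v.1 = 0 ∧ 1 ≤ v.2.1 ∧ v.2.1 ≤ k ∧ 1 ≤ v.2.2 ∧ v.2.2 ≤ n}

/-- The Spoiler-side output boundary: the vertices `y^i_j`, `i ∈ [1,k]`, `j ∈ [1,n]`. -/
def blkBdryY (k n : ℕ) : Set (ℕ × ℕ × ℕ) :=
  {v | v.1 = 1 ∧ 1 ≤ v.2.1 ∧ v.2.1 ≤ k ∧ 1 ≤ v.2.2 ∧ v.2.2 ≤ n}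

open Classical in
/-- The map `h^x_q` (resp. `h^y_q`) for a configuration `q = (a, b, T)`, acting on a
labelled block: it sends `x^i_{a(i)}` to `x^i_{b(i)}` for `i ∉ T`, and every other
`x^i_j` to the special vertex `x^i_0` (and likewise on `y`-blocks). -/
noncomputable def hBlk (a b : ℕ → ℕ) (T : Set ℕ) : ℕ × ℕ × ℕ → ℕ × ℕ × ℕ :=
  fun v => if v.2.2 = a v.2.1 ∧ v.2.1 ∉ T then (v.1, v.2.1, b v.2.1) else (v.1, v.2.1, 0)

/-! ### The right increment gadget `INC^right_ℓ`. -/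

/-- Spoiler's side of the right increment gadget: edges `{x^i_j, y^i_j}` for all
`i ∈ [1,k]`, `j ∈ [1,n]`. -/
def incRightS (k n : ℕ) : ColoredGraph (ℕ × ℕ × ℕ) (ℕ × ℕ) where
  graph := SimpleGraph.fromRel (fun u v =>
    ∃ i j, 1 ≤ i ∧ i ≤ k ∧ 1 ≤ j ∧ j ≤ n ∧ u = (0, i, j) ∧ v = (1, i, j))
  color := fun v => (v.1, v.2.1)

/-- Duplicator's side of the right increment gadget `INC^right_ℓ`:
for `i < ℓ` the edges `{x^i_j, y^i_j}` (`0 ≤ j ≤ m`); in block `ℓ` the edges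
`{x^ℓ_s, y^ℓ_{s+1}}` (`1 ≤ s ≤ m-1`), `{x^ℓ_0, y^ℓ_0}` and `{x^ℓ_m, y^ℓ_0}`;
for `i > ℓ` the edges `{x^i_m, y^i_1}` and `{x^i_j, y^i_0}` (`0 ≤ j ≤ m-1`). -/
def incRightD (k m ℓ : ℕ) : ColoredGraph (ℕ × ℕ × ℕ) (ℕ × ℕ) where
  graph := SimpleGraph.fromRel (fun u v =>
    ∃ i j j', 1 ≤ i ∧ i ≤ k ∧ u = (0, i, j) ∧ v = (1, i, j') ∧ j ≤ m ∧ j' ≤ m ∧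
      ((i < ℓ ∧ j' = j) ∨
       (i = ℓ ∧ ((1 ≤ j ∧ j < m ∧ j' = j + 1) ∨ (j = 0 ∧ j' = 0) ∨ (j = m ∧ j' = 0))) ∨
       (ℓ < i ∧ ((j = m ∧ j' = 1) ∨ (j < m ∧ j' = 0)))))
  color := fun v => (v.1, v.2.1)

/-- `INC^right_ℓ` is applicable to the valid configuration `(a, b, ∅)`:
`b(ℓ) < m` and `b(i) = m` for all `i > ℓ`. -/
def incRightApplicable (k m ℓ : ℕ) (b : ℕ → ℕ) : Prop :=
  b ℓ < m ∧ ∀ i, ℓ < i → i ≤ k → b i = m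

/-- The `b`-part of the successor configuration `q⁺` for `INC^right_ℓ`. -/
def incRightSucc (b : ℕ → ℕ) (ℓ : ℕ) : ℕ → ℕ :=
  fun i => if i < ℓ then b i else if i = ℓ then b i + 1 else 1

namespace IncRightProof

abbrev V := ℕ × ℕ × ℕ

/-- The pebbled pair on the input block for index `i`. -/
def xp (a b : ℕ → ℕ) (i : ℕ) : V × V := ((0, i, a i), (0, i, b i))

/-- The pebbled pair on the output block for index `i`. -/
def yp (a b : ℕ → ℕ) (ℓ i : ℕ) : V × V := ((1, i, a i), (1, i, incRightSucc b ℓ i))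

/-- Intermediate position after stage `t`: output pairs up to `t`, input pairs beyond. -/
def Pos (k : ℕ) (a b : ℕ → ℕ) (ℓ t : ℕ) : Finset (V × V) :=
  (Finset.Icc 1 k).image fun i => if i ≤ t then yp a b ℓ i else xp a b i

lemma yp_mem {k t i : ℕ} (a b : ℕ → ℕ) (ℓ : ℕ) (h1 : 1 ≤ i) (h2 : i ≤ k) (h3 : i ≤ t) :
    yp a b ℓ i ∈ Pos k a b ℓ t :=
  Finset.mem_image.mpr ⟨i, Finset.mem_Icc.mpr ⟨h1, h2⟩, if_pos h3⟩

lemma xp_mem {k t i : ℕ} (a b : ℕ → ℕ) (ℓ : ℕ) (h1 : 1 ≤ i) (h2 : i ≤ k) (h3 : t < i) :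
    xp a b i ∈ Pos k a b ℓ t :=
  Finset.mem_image.mpr ⟨i, Finset.mem_Icc.mpr ⟨h1, h2⟩, if_neg (by omega)⟩

lemma card_Pos {k t : ℕ} {a b : ℕ → ℕ} {ℓ : ℕ} : (Pos k a b ℓ t).card < k + 1 :=
  lt_of_le_of_lt Finset.card_image_le (by rw [Nat.card_Icc]; omega)

lemma Pos_succ_subset {k t : ℕ} {a b : ℕ → ℕ} {ℓ : ℕ} :
    Pos k a b ℓ (t + 1) ⊆ insert (yp a b ℓ (t + 1)) (Pos k a b ℓ t) := by
  intro z hz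
  obtain ⟨i, hi, rfl⟩ := Finset.mem_image.mp hz
  rw [Finset.mem_Icc] at hi
  by_cases h : i ≤ t + 1
  · rw [if_pos h]
    rcases eq_or_lt_of_le h with h' | h'
    · subst h'; exact Finset.mem_insert_self _ _
    · exact Finset.mem_insert_of_mem (yp_mem a b ℓ hi.1 hi.2 (by omega))
  · rw [if_neg h]
    exact Finset.mem_insert_of_mem (xp_mem a b ℓ hi.1 hi.2 (by omega))

/-- If a partial homomorphism pebbles `x^i_{a i} ↦ x^i_{b i}` and `y^i_{a i} ↦ d`,
then `d` is forced to be `y^i_{(incRightSucc b ℓ) i}`. -/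
lemma forced {k n m ℓ i : ℕ} {a b : ℕ → ℕ} {d : V}
    (hi1 : 1 ≤ i) (hik : i ≤ k) (ha1 : 1 ≤ a i) (ha2 : a i ≤ n)
    (hb1 : 1 ≤ b i) (hbl : b ℓ < m) (hbm : ℓ < i → b i = m)
    {P : Finset (V × V)}
    (hhom : PebbleCG.PartialHom (incRightS k n) (incRightD k m ℓ) P)
    (hx : ((0, i, a i), (0, i, b i)) ∈ P) (hy : ((1, i, a i), d) ∈ P) :
    d = (1, i, incRightSucc b ℓ i) := by
  obtain ⟨hfun, hcol, hedge⟩ := hhom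
  obtain ⟨d1, d2, d3⟩ := d
  have hc := hcol hy
  simp only [incRightD, incRightS, Prod.mk.injEq] at hc
  obtain ⟨hd1, hd2⟩ := hc
  subst hd1
  have hA : (incRightS k n).graph.Adj (0, i, a i) (1, i, a i) := by
    simp only [incRightS, SimpleGraph.fromRel_adj]
    exact ⟨by simp, Or.inl ⟨i, a i, hi1, hik, ha1, ha2, rfl, rfl⟩⟩
  have hB := hedge hx hy hA
  simp only [incRightD, SimpleGraph.fromRel_adj] at hB
  obtain ⟨-, hB⟩ := hB
  rcases hB with h | h
  · obtain ⟨i', j, j', hi'1, hi'k, hu, hv, hjm, hj'm, hcase⟩ := h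
    simp only [Prod.mk.injEq] at hu hv
    obtain ⟨-, hi', hj⟩ := hu
    obtain ⟨-, hi'', hj'⟩ := hv
    subst hi'
    have h3 : d3 = incRightSucc b ℓ i := by
      simp only [incRightSucc]
      rcases hcase with ⟨h1, h2⟩ | ⟨h1, h2⟩ | ⟨h1, h2⟩
      · split_ifs <;> omega
      · subst h1
        rcases h2 with ⟨u1, u2, u3⟩ | ⟨u1, u2⟩ | ⟨u1, u2⟩ <;> split_ifs <;> omega
      · have hbi := hbm h1
        rcases h2 with ⟨u1, u2⟩ | ⟨u1, u2⟩ <;> split_ifs <;> omega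
    rw [hd2, h3]
  · obtain ⟨i', j, j', _, _, hu, hv, _⟩ := h
    simp only [Prod.mk.injEq] at hu hv
    omega

end IncRightProof

/-- if `INC^right_ℓ` is applicable to the valid configuration `q = (a,b,∅)`,
then Spoiler can reach the position `q⁺ on y` from the position `q on x` in the
existential `(k+1)`-pebble game on `INC^right_ℓ`. -/
theorem spoiler_reach_inc_right (k n m ℓ : ℕ) (hk : 2 ≤ k) (hn : 1 ≤ n) (hm : 1 ≤ m)
    (hℓ1 : 1 ≤ ℓ) (hℓk : ℓ ≤ k) (a b : ℕ → ℕ)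
    (hwf : ∀ i, 1 ≤ i → i ≤ k → 1 ≤ a i ∧ a i ≤ n ∧ 1 ≤ b i ∧ b i ≤ m)
    (happ : incRightApplicable k m ℓ b) :
    PebbleCG.SpoilerReach (incRightS k n) (incRightD k m ℓ) (blkSetS k n) (blkSetD k m)
      (k + 1)
      ((Finset.Icc 1 k).image fun i => ((0, i, a i), (0, i, b i)))
      ((Finset.Icc 1 k).image fun i => ((1, i, a i), (1, i, incRightSucc b ℓ i))) := by
    classical
  obtain ⟨hbl, hbm⟩ := happ
  have hS : ∀ i, 1 ≤ i → i ≤ k → ((1:ℕ), i, a i) ∈ blkSetS k n := fun i h1 h2 =>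
    ⟨le_refl 1, h1, h2, (hwf i h1 h2).1, (hwf i h1 h2).2.1⟩
  have hforce : ∀ (i : ℕ), 1 ≤ i → i ≤ k → ∀ (dv : IncRightProof.V)
      (P : Finset (IncRightProof.V × IncRightProof.V)),
      ((0, i, a i), (0, i, b i)) ∈ P → ((1, i, a i), dv) ∈ P →
      PebbleCG.PartialHom (incRightS k n) (incRightD k m ℓ) P →
      dv = (1, i, incRightSucc b ℓ i) := fun i h1 h2 dv P hx hy hhom =>
    IncRightProof.forced h1 h2 (hwf i h1 h2).1 (hwf i h1 h2).2.1 (hwf i h1 h2).2.2.1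
      hbl (fun h => hbm i h h2) hhom hx hy
  have hstart : ((Finset.Icc 1 k).image fun i => (((0:ℕ), i, a i), ((0:ℕ), i, b i)))
      = IncRightProof.Pos k a b ℓ 0 :=
    Finset.image_congr fun i hi => by
      rw [Finset.coe_Icc, Set.mem_Icc] at hi
      rw [if_neg (by omega)]
      rfl
  have htarget : ((Finset.Icc 1 k).image fun i =>
        (((1:ℕ), i, a i), ((1:ℕ), i, incRightSucc b ℓ i)))
      = IncRightProof.Pos k a b ℓ k :=
    Finset.image_congr fun i hi => by
      rw [Finset.coe_Icc, Set.mem_Icc] at hi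
      rw [if_pos hi.2]
      rfl
  rw [hstart, htarget]
  have key : ∀ dd t, t + dd + 1 = k →
      PebbleCG.SpoilerReach (incRightS k n) (incRightD k m ℓ) (blkSetS k n) (blkSetD k m)
        (k + 1) (insert (IncRightProof.yp a b ℓ (t + 1)) (IncRightProof.Pos k a b ℓ t))
        (IncRightProof.Pos k a b ℓ k) := by
    intro dd
    induction dd with
    | zero =>
      intro t ht
      have hk' : k = t + 1 := by omega
      subst hk'
      refine PebbleCG.SpoilerReach.move (IncRightProof.Pos (t+1) a b ℓ (t+1)) (1, t+1, a (t+1))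
        IncRightProof.Pos_succ_subset IncRightProof.card_Pos (hS (t+1) (by omega) le_rfl) ?_
      intro dv _
      by_cases hc : dv = (1, t+1, incRightSucc b ℓ (t+1))
      · subst hc
        have he : ((((1:ℕ), t+1, a (t+1)), ((1:ℕ), t+1, incRightSucc b ℓ (t+1))) :
            IncRightProof.V × IncRightProof.V) = IncRightProof.yp a b ℓ (t+1) := rfl
        rw [he, Finset.insert_eq_self.mpr (IncRightProof.yp_mem a b ℓ (by omega) le_rfl le_rfl)]
        exact PebbleCG.SpoilerReach.refl
      · refine PebbleCG.SpoilerReach.win fun hhom => hc ?_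
        exact hhom.1 (Finset.mem_insert_self _ _)
          (Finset.mem_insert_of_mem (IncRightProof.yp_mem a b ℓ (by omega) le_rfl le_rfl))
    | succ dd ih =>
      intro t ht
      refine PebbleCG.SpoilerReach.move (IncRightProof.Pos k a b ℓ (t+1)) (1, t+2, a (t+2))
        IncRightProof.Pos_succ_subset IncRightProof.card_Pos
        (hS (t+2) (by omega) (by omega)) ?_
      intro dv _
      by_cases hc : dv = (1, t+2, incRightSucc b ℓ (t+2))
      · subst hc
        exact ih (t+1) (by omega)
      · refine PebbleCG.SpoilerReach.win fun hhom => hc ?_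
        exact hforce (t+2) (by omega) (by omega) dv _
          (Finset.mem_insert_of_mem (IncRightProof.xp_mem a b ℓ (by omega) (by omega) (by omega)))
          (Finset.mem_insert_self _ _) hhom
  refine PebbleCG.SpoilerReach.move (IncRightProof.Pos k a b ℓ 0) (1, 1, a 1)
    (Finset.Subset.refl _) IncRightProof.card_Pos (hS 1 le_rfl (by omega)) ?_
  intro dv _
  by_cases hc : dv = (1, 1, incRightSucc b ℓ 1)
  · subst hc
    exact key (k - 1) 0 (by omega)
  · refine PebbleCG.SpoilerReach.win fun hhom => hc ?_
    exact hforce 1 le_rfl (by omega) dv _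
      (Finset.mem_insert_of_mem (IncRightProof.xp_mem a b ℓ le_rfl (by omega) (by omega)))
      (Finset.mem_insert_self _ _) hhom
end

section
/- Let k ≥ 2, n, m ≥ 1, ℓ ∈ [k], and let q = (a,b,T) be a configuration. If INC^right_ℓ is applicable to q, then Duplicator has a winning strategy in the existential (k+1)-pebble game on INC^right_ℓ with boundary function h^x_q on the input block and h^y_{q^+} on the output block. If INC^right_ℓ is not applicable to q, then there exists an invalid configuration q_inv such that Duplicator has a winning strategy with boundary function h^x_q on the input block and h^y_{q_inv} on the output block. -/
section AuxStrategy

open PebbleCG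

variable {α β C : Type}

/-- A total homomorphism yields a winning strategy: take all finite subsets of its graph. -/
lemma strategy_of_fun [DecidableEq α] [DecidableEq β]
    (A : ColoredGraph α C) (B : ColoredGraph β C)
    (S : Set α) (D : Set β) (K : ℕ) (f : α → β)
    (hmap : ∀ v ∈ S, f v ∈ D)
    (hcol : ∀ v ∈ S, B.color (f v) = A.color v)
    (hedge : ∀ u v, A.graph.Adj u v → B.graph.Adj (f u) (f v)) :
    IsCriticalStrategy A B S D K {p | ∀ z ∈ p, z.1 ∈ S ∧ z.2 = f z.1} ∅ where
  nonempty := ⟨∅, by simp⟩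
  crit_subset := by simp
  mem_SD := fun p hp z hz => ⟨(hp z hz).1, by
    have h1 : z.2 = f z.1 := (hp z hz).2
    rw [h1]; exact hmap _ (hp z hz).1⟩
  isHom := fun p hp => by
    refine ⟨fun x y y' h h' => ?_, fun x y h => ?_, fun x y x' y' h h' hadj => ?_⟩
    · have h1 : y = f x := (hp _ h).2
      have h2 : y' = f x := (hp _ h').2
      rw [h1, h2]
    · have h1 : y = f x := (hp _ h).2
      rw [h1]; exact hcol _ (hp _ h).1
    · have h1 : y = f x := (hp _ h).2
      have h2 : y' = f x' := (hp _ h').2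
      rw [h1, h2]; exact hedge _ _ hadj
  crit_card := by simp
  downward := fun p hp q hq z hz => hp z (hq hz)
  extend := fun g hg _ _ x hx => ⟨f x, hmap x hx, fun z hz => by
    rcases Finset.mem_insert.mp hz with h | h
    · rw [h]; exact ⟨hx, rfl⟩
    · exact hg z h⟩

lemma boundary_of_fun {S : Set α} (f g : α → β) (bS : Set α)
    (hfg : ∀ z ∈ bS, f z = g z) :
    HasBoundaryFun {p : Finset (α × β) | ∀ z ∈ p, z.1 ∈ S ∧ z.2 = f z.1} bS g := by
  intro h hh z hz y hzy
  have := (hh (z, y) hzy).2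
  simpa [hfg z hz] using this

end AuxStrategy

open Classical in
/-- Master lemma: a single total homomorphism on `INC^right_ℓ` whose restriction to
the input block is `hBlk a b T` and to the output block is `hBlk a b2 T2`. -/
lemma incRight_master (k n m ℓ : ℕ) (hm : 1 ≤ m) (hℓ1 : 1 ≤ ℓ) (hℓk : ℓ ≤ k)
    (a b b2 : ℕ → ℕ) (T T2 : Set ℕ) (hTT2 : T ⊆ T2)
    (hwf : ∀ i, 1 ≤ i → i ≤ k → 1 ≤ a i ∧ a i ≤ n ∧ 1 ≤ b i ∧ b i ≤ m)
    (hout : ∀ i, 1 ≤ i → i ≤ k → i ∉ T2 →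
      (i < ℓ → b2 i = b i) ∧ (i = ℓ → b ℓ < m ∧ b2 ℓ = b ℓ + 1) ∧
      (ℓ < i → b i = m ∧ b2 i = 1))
    (hb2 : ∀ i, 1 ≤ i → i ≤ k → b2 i ≤ m)
    (hcrit : ∀ i, 1 ≤ i → i ≤ k → i ∈ T2 → i ∉ T →
      (i = ℓ ∧ b ℓ = m) ∨ (ℓ < i ∧ b i < m)) :
    ∃ H : Set (Finset ((ℕ × ℕ × ℕ) × ℕ × ℕ × ℕ)),
      PebbleCG.IsCriticalStrategy (incRightS k n) (incRightD k m ℓ)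
        (blkSetS k n) (blkSetD k m) (k + 1) H ∅ ∧
      PebbleCG.HasBoundaryFun H (blkBdryX k n) (hBlk a b T) ∧
      PebbleCG.HasBoundaryFun H (blkBdryY k n) (hBlk a b2 T2) := by
  set f : ℕ × ℕ × ℕ → ℕ × ℕ × ℕ :=
    fun w => if w.1 = 0 then hBlk a b T w else hBlk a b2 T2 w with hf
  refine ⟨{p | ∀ z ∈ p, z.1 ∈ blkSetS k n ∧ z.2 = f z.1}, ?_, ?_, ?_⟩
  · apply strategy_of_fun
    · -- maps S into D
      rintro ⟨l, i, j⟩ ⟨hl, hi1, hik, _, _⟩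
      have hb := (hwf i hi1 hik).2.2.2
      have hb2' := hb2 i hi1 hik
      simp only [hf, hBlk, blkSetD, Set.mem_setOf_eq]
      split <;> split <;> refine ⟨hl, hi1, hik, ?_⟩ <;> dsimp only <;> omega
    · -- colors
      rintro ⟨l, i, j⟩ _
      simp only [hf, hBlk, incRightS, incRightD]
      split <;> split <;> rfl
    · -- edges
      rintro u v huv
      rw [incRightS, SimpleGraph.fromRel_adj] at huv
      obtain ⟨-, hrel⟩ := huv
      -- reduce to the oriented case
      have key : ∀ i j, 1 ≤ i → i ≤ k → 1 ≤ j → j ≤ n →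
          (incRightD k m ℓ).graph.Adj (f (0, i, j)) (f (1, i, j)) := by
        intro i j hi1 hik hj1 hjn
        obtain ⟨ha1, han, hb1, hbm⟩ := hwf i hi1 hik
        have hb2' := hb2 i hi1 hik
        simp only [hf, hBlk, if_pos rfl, if_neg (one_ne_zero)]
        rw [incRightD, SimpleGraph.fromRel_adj]
        constructor
        · split <;> split <;> simp
        · left
          by_cases hA : j = a i ∧ i ∉ T2
          · have hAT : j = a i ∧ i ∉ T := ⟨hA.1, fun h => hA.2 (hTT2 h)⟩
            rw [if_pos hAT, if_pos hA]
            obtain ⟨h1, h2, h3⟩ := hout i hi1 hik hA.2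
            refine ⟨i, b i, b2 i, hi1, hik, rfl, rfl, hbm, hb2', ?_⟩
            rcases lt_trichotomy i ℓ with hc | hc | hc
            · exact Or.inl ⟨hc, (h1 hc).symm ▸ rfl⟩
            · subst hc
              obtain ⟨hlt, heq⟩ := h2 rfl
              exact Or.inr (Or.inl ⟨rfl, Or.inl ⟨hb1, hlt, heq⟩⟩)
            · obtain ⟨hbm', heq⟩ := h3 hc
              exact Or.inr (Or.inr ⟨hc, Or.inl ⟨hbm', heq⟩⟩)
          · rw [if_neg hA]
            by_cases hB : j = a i ∧ i ∉ T
            · have hiT2 : i ∈ T2 := by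
                by_contra hc; exact hA ⟨hB.1, hc⟩
              rw [if_pos hB]
              rcases hcrit i hi1 hik hiT2 hB.2 with ⟨hiℓ, hbℓ⟩ | ⟨hiℓ, hbi⟩
              · subst hiℓ
                exact ⟨i, b i, 0, hi1, hik, rfl, rfl, hbm, by omega,
                  Or.inr (Or.inl ⟨rfl, Or.inr (Or.inr ⟨hbℓ, rfl⟩)⟩)⟩
              · exact ⟨i, b i, 0, hi1, hik, rfl, rfl, hbm, by omega,
                  Or.inr (Or.inr ⟨hiℓ, Or.inr ⟨hbi, rfl⟩⟩)⟩
            · rw [if_neg hB]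
              refine ⟨i, 0, 0, hi1, hik, rfl, rfl, by omega, by omega, ?_⟩
              rcases lt_trichotomy i ℓ with hc | hc | hc
              · exact Or.inl ⟨hc, rfl⟩
              · exact Or.inr (Or.inl ⟨hc, Or.inr (Or.inl ⟨rfl, rfl⟩)⟩)
              · exact Or.inr (Or.inr ⟨hc, Or.inr ⟨by omega, rfl⟩⟩)
      rcases hrel with ⟨i, j, hi1, hik, hj1, hjn, hu, hv⟩ | ⟨i, j, hi1, hik, hj1, hjn, hv, hu⟩
      · subst hu; subst hv; exact key i j hi1 hik hj1 hjn
      · subst hu; subst hv; exact (key i j hi1 hik hj1 hjn).symm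
  · apply boundary_of_fun
    rintro ⟨l, i, j⟩ ⟨hl, -⟩
    simp only [hf]
    rw [if_pos hl]
  · apply boundary_of_fun
    rintro ⟨l, i, j⟩ ⟨hl, -⟩
    simp only [hf]
    rw [if_neg (by omega : l ≠ 0)]

/-- for every configuration `q = (a,b,T)`: if `INC^right_ℓ` is applicable
to `q`, then Duplicator has a winning strategy on `INC^right_ℓ` with boundary function
`h^x_q` on the input block and `h^y_{q⁺}` on the output block; if `INC^right_ℓ` is not
applicable to `q`, then there is an invalid configuration `q_inv` such that Duplicator
has a winning strategy with boundary function `h^x_q` on the input block and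
`h^y_{q_inv}` on the output block. -/
theorem duplicator_strategies_inc_right (k n m ℓ : ℕ) (hk : 2 ≤ k) (hn : 1 ≤ n)
    (hm : 1 ≤ m) (hℓ1 : 1 ≤ ℓ) (hℓk : ℓ ≤ k)
    (a b : ℕ → ℕ) (T : Set ℕ) (hT : T ⊆ Set.Icc 1 k)
    (hwf : ∀ i, 1 ≤ i → i ≤ k → 1 ≤ a i ∧ a i ≤ n ∧ 1 ≤ b i ∧ b i ≤ m) :
    ((T = ∅ ∧ incRightApplicable k m ℓ b) →
      ∃ H : Set (Finset ((ℕ × ℕ × ℕ) × ℕ × ℕ × ℕ)),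
        PebbleCG.IsCriticalStrategy (incRightS k n) (incRightD k m ℓ)
          (blkSetS k n) (blkSetD k m) (k + 1) H ∅ ∧
        PebbleCG.HasBoundaryFun H (blkBdryX k n) (hBlk a b T) ∧
        PebbleCG.HasBoundaryFun H (blkBdryY k n) (hBlk a (incRightSucc b ℓ) ∅)) ∧
    (¬ (T = ∅ ∧ incRightApplicable k m ℓ b) →
      ∃ (a' b' : ℕ → ℕ) (T' : Set ℕ), T' ⊆ Set.Icc 1 k ∧ T'.Nonempty ∧
        (∀ i, 1 ≤ i → i ≤ k → 1 ≤ a' i ∧ a' i ≤ n ∧ 1 ≤ b' i ∧ b' i ≤ m) ∧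
        ∃ H : Set (Finset ((ℕ × ℕ × ℕ) × ℕ × ℕ × ℕ)),
          PebbleCG.IsCriticalStrategy (incRightS k n) (incRightD k m ℓ)
            (blkSetS k n) (blkSetD k m) (k + 1) H ∅ ∧
          PebbleCG.HasBoundaryFun H (blkBdryX k n) (hBlk a b T) ∧
          PebbleCG.HasBoundaryFun H (blkBdryY k n) (hBlk a' b' T')) := by
  classical
  constructor
  · rintro ⟨hT0, hbl, hgt⟩
    subst hT0
    apply incRight_master k n m ℓ hm hℓ1 hℓk a b _ _ ∅ (by simp) hwf
    · intro i hi1 hik _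
      refine ⟨fun hc => ?_, fun hc => ?_, fun hc => ?_⟩
      · simp [incRightSucc, hc]
      · subst hc; simp [incRightSucc]; exact hbl
      · refine ⟨hgt i hc hik, ?_⟩
        simp [incRightSucc, hc, Nat.lt_asymm hc, Nat.ne_of_gt hc]
    · intro i hi1 hik
      have := (hwf i hi1 hik).2.2.2
      rcases lt_trichotomy i ℓ with hc | hc | hc
      · simpa [incRightSucc, hc] using this
      · subst hc; simpa [incRightSucc] using hbl
      · simp [incRightSucc, Nat.lt_asymm hc, Nat.ne_of_gt hc]; omega
    · simp
  · intro hna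
    set T' : Set ℕ :=
      T ∪ {i | 1 ≤ i ∧ i ≤ k ∧ ((i = ℓ ∧ b ℓ = m) ∨ (ℓ < i ∧ b i < m))} with hT'
    set b' : ℕ → ℕ := fun i => if i ∈ T' then 1 else incRightSucc b ℓ i with hb'
    have hT'sub : T' ⊆ Set.Icc 1 k := by
      rintro i (hi | ⟨h1, h2, -⟩)
      · exact hT hi
      · exact ⟨h1, h2⟩
    have hT'ne : T'.Nonempty := by
      rcases Set.eq_empty_or_nonempty T with hTe | hTne
      · subst hTe
        rcases not_and_or.mp hna with h | h
        · exact absurd rfl h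
        · rw [incRightApplicable, not_and_or] at h
          rcases h with h | h
          · have hbm : b ℓ = m := by
              have := (hwf ℓ hℓ1 hℓk).2.2.2; omega
            exact ⟨ℓ, Or.inr ⟨hℓ1, hℓk, Or.inl ⟨rfl, hbm⟩⟩⟩
          · push_neg at h
            obtain ⟨i, hiℓ, hik, hbi⟩ := h
            have : b i < m := by
              have := (hwf i (by omega) hik).2.2.2; omega
            exact ⟨i, Or.inr ⟨by omega, hik, Or.inr ⟨hiℓ, this⟩⟩⟩
      · exact hTne.mono Set.subset_union_left
    refine ⟨a, b', T', hT'sub, hT'ne, ?_, ?_⟩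
    · intro i hi1 hik
      obtain ⟨h1, h2, h3, h4⟩ := hwf i hi1 hik
      refine ⟨h1, h2, ?_, ?_⟩ <;> simp only [hb']
      · split_ifs
        · exact le_refl 1
        · rcases lt_trichotomy i ℓ with hc | hc | hc
          · simpa [incRightSucc, hc] using h3
          · subst hc; simp [incRightSucc]
          · simp [incRightSucc, Nat.lt_asymm hc, Nat.ne_of_gt hc]
      · split_ifs with hmem
        · exact hm
        · rcases lt_trichotomy i ℓ with hc | hc | hc
          · simpa [incRightSucc, hc] using h4
          · subst hc
            have hne : b i ≠ m := fun hbm =>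
              hmem (Or.inr ⟨hi1, hik, Or.inl ⟨rfl, hbm⟩⟩)
            simp [incRightSucc]; omega
          · simp [incRightSucc, Nat.lt_asymm hc, Nat.ne_of_gt hc]; exact hm
    · apply incRight_master k n m ℓ hm hℓ1 hℓk a b b' T T' Set.subset_union_left hwf
      · intro i hi1 hik hiT'
        have hnot : ¬ ((i = ℓ ∧ b ℓ = m) ∨ (ℓ < i ∧ b i < m)) := fun hc =>
          hiT' (Or.inr ⟨hi1, hik, hc⟩)
        have hbv : b' i = incRightSucc b ℓ i := by simp only [hb']; exact if_neg hiT'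
        refine ⟨fun hc => ?_, fun hc => ?_, fun hc => ?_⟩
        · rw [hbv]; simp [incRightSucc, hc]
        · subst hc
          have hbm := (hwf i hi1 hik).2.2.2
          have : b i ≠ m := fun h => hnot (Or.inl ⟨rfl, h⟩)
          rw [hbv]; simp [incRightSucc]; omega
        · have : ¬ b i < m := fun h => hnot (Or.inr ⟨hc, h⟩)
          have hbm := (hwf i hi1 hik).2.2.2
          rw [hbv]
          simp [incRightSucc, Nat.lt_asymm hc, Nat.ne_of_gt hc]; omega
      · intro i hi1 hik
        simp only [hb']
        split_ifs with hmem
        · exact hm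
        · have := (hwf i hi1 hik).2.2.2
          rcases lt_trichotomy i ℓ with hc | hc | hc
          · simpa [incRightSucc, hc] using this
          · subst hc
            have hne : b i ≠ m := fun hbm =>
              hmem (Or.inr ⟨hi1, hik, Or.inl ⟨rfl, hbm⟩⟩)
            simp [incRightSucc]; omega
          · simp [incRightSucc, Nat.lt_asymm hc, Nat.ne_of_gt hc]; exact hm
      · intro i hi1 hik hiT' hiT
        rcases hiT' with h | ⟨-, -, h⟩
        · exact absurd h hiT
        · exact h
end

section
/- Let k ≥ 2, n, m ≥ 1, ℓ ∈ [k], and let q be a configuration to which the left increment gadget INC^left_ℓ is applicable. Then in the existential (k+1)-pebble game on INC^left_ℓ, Spoiler can reach the position 'q^+ on y' (on the output block) from the position 'q on x' (on the input block). -/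
/-! ### The left increment gadget `INC^left_ℓ`. -/

/-- Spoiler's side of the left increment gadget `INC^left_ℓ`: edges `{x^i_j, y^i_j}` for
`i < ℓ`, `j ∈ [1,n]`; `{x^ℓ_j, y^ℓ_{j+1}}` for `1 ≤ j ≤ n-1`; and `{x^i_n, y^i_1}` for
`i > ℓ`. -/
def incLeftS (k n ℓ : ℕ) : ColoredGraph (ℕ × ℕ × ℕ) (ℕ × ℕ) where
  graph := SimpleGraph.fromRel (fun u v =>
    ∃ i j j', 1 ≤ i ∧ i ≤ k ∧ 1 ≤ j ∧ j ≤ n ∧ 1 ≤ j' ∧ j' ≤ n ∧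
      u = (0, i, j) ∧ v = (1, i, j') ∧
      ((i < ℓ ∧ j' = j) ∨ (i = ℓ ∧ j < n ∧ j' = j + 1) ∨ (ℓ < i ∧ j = n ∧ j' = 1)))
  color := fun v => (v.1, v.2.1)

/-- Duplicator's side of the left increment gadget: in every block `i ∈ [1,k]` the edges
`{x^i_m, y^i_1}` and `{x^i_j, y^i_0}` for `0 ≤ j ≤ m-1`. -/
def incLeftD (k m : ℕ) : ColoredGraph (ℕ × ℕ × ℕ) (ℕ × ℕ) where
  graph := SimpleGraph.fromRel (fun u v =>
    ∃ i j j', 1 ≤ i ∧ i ≤ k ∧ u = (0, i, j) ∧ v = (1, i, j') ∧ j ≤ m ∧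
      ((j = m ∧ j' = 1) ∨ (j < m ∧ j' = 0)))
  color := fun v => (v.1, v.2.1)

/-- `INC^left_ℓ` is applicable to the valid configuration `(a, b, ∅)`:
`a(ℓ) < n`, `a(i) = n` for all `i > ℓ`, and `b(i) = m` for all `i ∈ [1,k]`. -/
def incLeftApplicable (k n m ℓ : ℕ) (a b : ℕ → ℕ) : Prop :=
  a ℓ < n ∧ (∀ i, ℓ < i → i ≤ k → a i = n) ∧ (∀ i, 1 ≤ i → i ≤ k → b i = m)

/-- The `a`-part of the successor configuration `q⁺` for `INC^left_ℓ`
(its `b`-part is constantly `1`). -/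
def incLeftSucc (a : ℕ → ℕ) (ℓ : ℕ) : ℕ → ℕ :=
  fun i => if i < ℓ then a i else if i = ℓ then a i + 1 else 1


section AuxIncLeft

variable {k n m ℓ : ℕ} {a b : ℕ → ℕ}

lemma succ_bounds (hn : 1 ≤ n)
    (hwf : ∀ i, 1 ≤ i → i ≤ k → 1 ≤ a i ∧ a i ≤ n ∧ 1 ≤ b i ∧ b i ≤ m)
    (happ : incLeftApplicable k n m ℓ a b) :
    ∀ j, 1 ≤ j → j ≤ k → 1 ≤ incLeftSucc a ℓ j ∧ incLeftSucc a ℓ j ≤ n := by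
  intro j h1 h2
  have hw := hwf j h1 h2
  have h1' := happ.1
  unfold incLeftSucc
  split_ifs with h h'
  · exact ⟨hw.1, hw.2.1⟩
  · subst h'; omega
  · omega

lemma adjS (hn : 1 ≤ n)
    (hwf : ∀ i, 1 ≤ i → i ≤ k → 1 ≤ a i ∧ a i ≤ n ∧ 1 ≤ b i ∧ b i ≤ m)
    (happ : incLeftApplicable k n m ℓ a b) :
    ∀ j, 1 ≤ j → j ≤ k →
      (incLeftS k n ℓ).graph.Adj (0, j, a j) (1, j, incLeftSucc a ℓ j) := by
  intro j h1 h2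
  have hb := succ_bounds hn hwf happ j h1 h2
  have hw := hwf j h1 h2
  rw [incLeftS]
  rw [SimpleGraph.fromRel_adj]
  refine ⟨by simp, Or.inl ?_⟩
  refine ⟨j, a j, incLeftSucc a ℓ j, h1, h2, hw.1, hw.2.1, hb.1, hb.2, rfl, rfl, ?_⟩
  rcases lt_trichotomy j ℓ with h | h | h
  · exact Or.inl ⟨h, by unfold incLeftSucc; split_ifs <;> omega⟩
  · subst h
    exact Or.inr (Or.inl ⟨rfl, happ.1, by unfold incLeftSucc; split_ifs <;> omega⟩)
  · exact Or.inr (Or.inr ⟨h, happ.2.1 j h h2, by unfold incLeftSucc; split_ifs <;> omega⟩)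

lemma notAdjD : ∀ j j'' : ℕ, j'' ≠ 1 →
    ¬ (incLeftD k m).graph.Adj (0, j, m) (1, j, j'') := by
  intro j j'' hne h
  rw [incLeftD, SimpleGraph.fromRel_adj] at h
  obtain ⟨-, h | h⟩ := h <;>
    simp only [Prod.mk.injEq] at h <;> omega

/-- Intermediate positions in Spoiler's strategy. -/
def posS (k : ℕ) (a b : ℕ → ℕ) (ℓ i : ℕ) : Finset ((ℕ × ℕ × ℕ) × (ℕ × ℕ × ℕ)) :=
  ((Finset.Icc 1 i).image fun j => ((1, j, incLeftSucc a ℓ j), (1, j, 1))) ∪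
  ((Finset.Icc (i+1) k).image fun j => ((0, j, a j), (0, j, b j)))

lemma posS_card (k : ℕ) (a b : ℕ → ℕ) (ℓ i : ℕ) (hik : i ≤ k) : (posS k a b ℓ i).card < k + 1 := by
  have h1 := Finset.card_union_le
    ((Finset.Icc 1 i).image fun j => ((1, j, incLeftSucc a ℓ j), ((1:ℕ), j, (1:ℕ))))
    ((Finset.Icc (i+1) k).image fun j => ((0, j, a j), ((0:ℕ), j, b j)))
  have h2 := Finset.card_image_le (s := Finset.Icc 1 i)
    (f := fun j => (((1:ℕ), j, incLeftSucc a ℓ j), ((1:ℕ), j, (1:ℕ))))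
  have h3 := Finset.card_image_le (s := Finset.Icc (i+1) k)
    (f := fun j => (((0:ℕ), j, a j), ((0:ℕ), j, b j)))
  rw [Nat.card_Icc] at h2 h3
  rw [posS]
  omega

lemma reach_aux (k n m ℓ : ℕ) (hk : 2 ≤ k) (hn : 1 ≤ n) (hm : 1 ≤ m)
    (hℓ1 : 1 ≤ ℓ) (hℓk : ℓ ≤ k) (a b : ℕ → ℕ)
    (hwf : ∀ i, 1 ≤ i → i ≤ k → 1 ≤ a i ∧ a i ≤ n ∧ 1 ≤ b i ∧ b i ≤ m)
    (happ : incLeftApplicable k n m ℓ a b) :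
    ∀ cnt i : ℕ, i + cnt = k →
    ∀ p : Finset ((ℕ × ℕ × ℕ) × (ℕ × ℕ × ℕ)), posS k a b ℓ i ⊆ p →
      PebbleCG.SpoilerReach (incLeftS k n ℓ) (incLeftD k m) (blkSetS k n) (blkSetD k m)
        (k + 1) p
        ((Finset.Icc 1 k).image fun i => ((1, i, incLeftSucc a ℓ i), (1, i, 1))) := by
  intro cnt
  induction cnt with
  | zero =>
    intro i hik p hsub
    have hik' : i = k := by omega
    rw [hik'] at hsub
    have hsb := succ_bounds hn hwf happ k (by omega) le_rfl
    have hmemk : ((1, k, incLeftSucc a ℓ k), ((1:ℕ), k, (1:ℕ))) ∈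
        ((Finset.Icc 1 k).image fun j => (((1:ℕ), j, incLeftSucc a ℓ j), ((1:ℕ), j, (1:ℕ)))) :=
      Finset.mem_image.mpr ⟨k, Finset.mem_Icc.mpr ⟨by omega, le_rfl⟩, rfl⟩
    refine PebbleCG.SpoilerReach.move
      ((Finset.Icc 1 k).image fun j => (((1:ℕ), j, incLeftSucc a ℓ j), ((1:ℕ), j, (1:ℕ))))
      (1, k, incLeftSucc a ℓ k) ?_ ?_ ?_ ?_
    · exact subset_trans (by rw [posS]; exact Finset.subset_union_left) hsub
    · have := Finset.card_image_le (s := Finset.Icc 1 k)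
        (f := fun j => (((1:ℕ), j, incLeftSucc a ℓ j), ((1:ℕ), j, (1:ℕ))))
      rw [Nat.card_Icc] at this
      omega
    · have hk1 : 1 ≤ k := by omega
      exact ⟨Nat.le_refl 1, hk1, le_rfl, hsb.1, hsb.2⟩
    · intro d hd
      by_cases hcase : d = (1, k, 1)
      · subst hcase
        rw [Finset.insert_eq_self.mpr hmemk]
        exact PebbleCG.SpoilerReach.refl
      · refine PebbleCG.SpoilerReach.win ?_
        rintro ⟨hf, -, -⟩
        exact hcase (hf (Finset.mem_insert_self _ _) (Finset.mem_insert_of_mem hmemk))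
  | succ cnt ih =>
    intro i hik p hsub
    have hik' : i + 1 ≤ k := by omega
    have hsb := succ_bounds hn hwf happ (i+1) (by omega) hik'
    have hmemx : (((0:ℕ), i+1, a (i+1)), ((0:ℕ), i+1, b (i+1))) ∈ posS k a b ℓ i := by
      rw [posS]
      exact Finset.mem_union_right _
        (Finset.mem_image.mpr ⟨i+1, Finset.mem_Icc.mpr ⟨le_rfl, hik'⟩, rfl⟩)
    refine PebbleCG.SpoilerReach.move (posS k a b ℓ i)
      (1, i+1, incLeftSucc a ℓ (i+1)) hsub (posS_card k a b ℓ i (by omega)) ?_ ?_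
    · exact ⟨Nat.le_refl 1, Nat.le_add_left 1 i, hik', hsb.1, hsb.2⟩
    · intro d hd
      by_cases hcase : d = (1, i+1, 1)
      · subst hcase
        refine ih (i+1) (by omega) _ ?_
        intro z hz
        rw [posS] at hz
        rcases Finset.mem_union.mp hz with hz | hz
        · obtain ⟨j, hj, rfl⟩ := Finset.mem_image.mp hz
          rw [Finset.mem_Icc] at hj
          by_cases hji : j = i + 1
          · subst hji; exact Finset.mem_insert_self _ _
          · refine Finset.mem_insert_of_mem ?_
            rw [posS]
            exact Finset.mem_union_left _
              (Finset.mem_image.mpr ⟨j, Finset.mem_Icc.mpr ⟨hj.1, by omega⟩, rfl⟩)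
        · obtain ⟨j, hj, rfl⟩ := Finset.mem_image.mp hz
          rw [Finset.mem_Icc] at hj
          refine Finset.mem_insert_of_mem ?_
          rw [posS]
          exact Finset.mem_union_right _
            (Finset.mem_image.mpr ⟨j, Finset.mem_Icc.mpr ⟨by omega, hj.2⟩, rfl⟩)
      · refine PebbleCG.SpoilerReach.win ?_
        rintro ⟨-, hc, he⟩
        have hy : ((1, i+1, incLeftSucc a ℓ (i+1)), d) ∈
            insert ((1, i+1, incLeftSucc a ℓ (i+1)), d) (posS k a b ℓ i) :=
          Finset.mem_insert_self _ _
        have hx : (((0:ℕ), i+1, a (i+1)), ((0:ℕ), i+1, b (i+1))) ∈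
            insert ((1, i+1, incLeftSucc a ℓ (i+1)), d) (posS k a b ℓ i) :=
          Finset.mem_insert_of_mem hmemx
        have hcol := hc hy
        have hadj := he hx hy (adjS hn hwf happ (i+1) (by omega) hik')
        obtain ⟨d1, d2, d3⟩ := d
        have hcol' : d1 = 1 ∧ d2 = i + 1 := by
          rw [incLeftS, incLeftD] at hcol
          simp only [Prod.mk.injEq] at hcol
          exact hcol
        obtain ⟨rfl, rfl⟩ := hcol'
        have hd3 : d3 ≠ 1 := by intro h; exact hcase (by rw [h])
        rw [happ.2.2 (i+1) (by omega) hik'] at hadj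
        exact notAdjD (i+1) d3 hd3 hadj

end AuxIncLeft

/-- if `INC^left_ℓ` is applicable to the valid configuration `q = (a,b,∅)`,
then Spoiler can reach the position `q⁺ on y` from the position `q on x` in the
existential `(k+1)`-pebble game on `INC^left_ℓ`. -/
theorem spoiler_reach_inc_left (k n m ℓ : ℕ) (hk : 2 ≤ k) (hn : 1 ≤ n) (hm : 1 ≤ m)
    (hℓ1 : 1 ≤ ℓ) (hℓk : ℓ ≤ k) (a b : ℕ → ℕ)
    (hwf : ∀ i, 1 ≤ i → i ≤ k → 1 ≤ a i ∧ a i ≤ n ∧ 1 ≤ b i ∧ b i ≤ m)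
    (happ : incLeftApplicable k n m ℓ a b) :
    PebbleCG.SpoilerReach (incLeftS k n ℓ) (incLeftD k m) (blkSetS k n) (blkSetD k m)
      (k + 1)
      ((Finset.Icc 1 k).image fun i => ((0, i, a i), (0, i, b i)))
      ((Finset.Icc 1 k).image fun i => ((1, i, incLeftSucc a ℓ i), (1, i, 1))) := by
  refine reach_aux k n m ℓ hk hn hm hℓ1 hℓk a b hwf happ k 0 (by omega) _ ?_
  rw [posS]
  simp
end

section
/- Let k ≥ 2, n, m ≥ 1, ℓ ∈ [k], and let q = (a,b,T) be a configuration. If INC^left_ℓ is applicable to q, then Duplicator has a winning strategy in the existential (k+1)-pebble game on INC^left_ℓ with boundary function h^x_q on the input block and h^y_{q^+} on the output block. If INC^left_ℓ is not applicable to q, then there exists an invalid configuration q_inv such that Duplicator has a winning strategy with boundary function h^x_q on the input block and h^y_{q_inv} on the output block. -/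
section AuxStrategy

open PebbleCG

variable {α β C : Type}

theorem isCriticalStrategy_of_hom [DecidableEq α] [DecidableEq β]
    (A : ColoredGraph α C) (B : ColoredGraph β C)
    (S : Set α) (D : Set β) (K : ℕ) (f : α → β)
    (hSD : ∀ x ∈ S, f x ∈ D)
    (hcol : ∀ x, B.color (f x) = A.color x)
    (hadj : ∀ x y, A.graph.Adj x y → B.graph.Adj (f x) (f y)) :
    PebbleCG.IsCriticalStrategy A B S D K
      {p | ∀ z ∈ p, z.1 ∈ S ∧ z.2 = f z.1} (∅ : Set (Finset (α × β))) := by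
  constructor
  · exact ⟨∅, by simp⟩
  · simp
  · intro p hp z hz
    obtain ⟨h1, h2⟩ := hp z hz
    exact ⟨h1, h2 ▸ hSD _ h1⟩
  · intro p hp
    refine ⟨?_, ?_, ?_⟩
    · intro x y y' hxy hxy'
      exact ((hp _ hxy).2).trans ((hp _ hxy').2).symm
    · intro x y hxy
      have h2 : y = f x := (hp _ hxy).2
      rw [h2]; exact hcol x
    · intro x y x' y' hxy hx'y' hAdj
      have h1 : y = f x := (hp _ hxy).2
      have h2 : y' = f x' := (hp _ hx'y').2
      rw [h1, h2]
      exact hadj _ _ hAdj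
  · simp
  · intro p hp q hq z hz
    exact hp z (hq hz)
  · intro g hg _ _ x hx
    refine ⟨f x, hSD x hx, ?_⟩
    intro z hz
    rcases Finset.mem_insert.mp hz with h | h
    · subst h; exact ⟨hx, rfl⟩
    · exact hg z h

theorem exists_strategy_of_hom [DecidableEq α] [DecidableEq β]
    (A : ColoredGraph α C) (B : ColoredGraph β C)
    (S : Set α) (D : Set β) (K : ℕ) (f : α → β)
    (bX bY : Set α) (gX gY : α → β)
    (hSD : ∀ x ∈ S, f x ∈ D)
    (hcol : ∀ x, B.color (f x) = A.color x)
    (hadj : ∀ x y, A.graph.Adj x y → B.graph.Adj (f x) (f y))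
    (hgX : ∀ z ∈ bX, f z = gX z) (hgY : ∀ z ∈ bY, f z = gY z) :
    ∃ H : Set (Finset (α × β)),
      PebbleCG.IsCriticalStrategy A B S D K H ∅ ∧
      PebbleCG.HasBoundaryFun H bX gX ∧
      PebbleCG.HasBoundaryFun H bY gY := by
  refine ⟨{p | ∀ z ∈ p, z.1 ∈ S ∧ z.2 = f z.1},
    isCriticalStrategy_of_hom A B S D K f hSD hcol hadj, ?_, ?_⟩
  · intro h hH z hz y hy
    exact ((hH (z, y) hy).2).trans (hgX z hz)
  · intro h hH z hz y hy
    exact ((hH (z, y) hy).2).trans (hgY z hz)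

end AuxStrategy
lemma hBlk_pos (a b : ℕ → ℕ) (T : Set ℕ) (l i j : ℕ) (h1 : j = a i) (h2 : i ∉ T) :
    hBlk a b T (l, i, j) = (l, i, b i) := by
  simp only [hBlk]
  split
  next => rfl
  next hc => exact absurd ⟨h1, h2⟩ hc

lemma hBlk_neg (a b : ℕ → ℕ) (T : Set ℕ) (l i j : ℕ) (h : ¬ (j = a i ∧ i ∉ T)) :
    hBlk a b T (l, i, j) = (l, i, 0) := by
  simp only [hBlk]
  split
  next hc => exact absurd hc h
  next => rfl

lemma hBlk_cases (a b : ℕ → ℕ) (T : Set ℕ) (v : ℕ × ℕ × ℕ) :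
    hBlk a b T v = (v.1, v.2.1, b v.2.1) ∨ hBlk a b T v = (v.1, v.2.1, 0) := by
  simp only [hBlk]
  split
  next => exact Or.inl rfl
  next => exact Or.inr rfl

/-- Block `i` is "good": the increment gadget behaves like the applicable case there. -/
def incGood (n m ℓ : ℕ) (a b : ℕ → ℕ) (T : Set ℕ) (i : ℕ) : Prop :=
  i ∉ T ∧ b i = m ∧ (i < ℓ ∨ (i = ℓ ∧ a ℓ < n) ∨ (ℓ < i ∧ a i = n))

/-- The blocked set of the output configuration. -/
def incBad (k n m ℓ : ℕ) (a b : ℕ → ℕ) (T : Set ℕ) : Set ℕ :=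
  {i | ¬ incGood n m ℓ a b T i} ∩ Set.Icc 1 k

/-- The `a`-part of the output configuration. -/
def incA' (n ℓ : ℕ) (a : ℕ → ℕ) : ℕ → ℕ :=
  fun i => if i < ℓ then a i else if i = ℓ ∧ a ℓ < n then a ℓ + 1 else 1

lemma incLeftD_adj (k m i c c' : ℕ) (hi1 : 1 ≤ i) (hik : i ≤ k) (hcm : c ≤ m)
    (h : (c = m ∧ c' = 1) ∨ (c < m ∧ c' = 0)) :
    (incLeftD k m).graph.Adj (0, i, c) (1, i, c') := by
  simp only [incLeftD, SimpleGraph.fromRel_adj]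
  exact ⟨by simp, Or.inl ⟨i, c, c', hi1, hik, rfl, rfl, hcm, h⟩⟩
lemma inc_key (k n m ℓ : ℕ) (hm : 1 ≤ m)
    (a b : ℕ → ℕ) (T : Set ℕ)
    (hwf : ∀ i, 1 ≤ i → i ≤ k → 1 ≤ a i ∧ a i ≤ n ∧ 1 ≤ b i ∧ b i ≤ m)
    (i j j' : ℕ) (hi1 : 1 ≤ i) (hik : i ≤ k) (hj1 : 1 ≤ j) (hjn : j ≤ n)
    (hdir : (i < ℓ ∧ j' = j) ∨ (i = ℓ ∧ j < n ∧ j' = j + 1) ∨ (ℓ < i ∧ j = n ∧ j' = 1)) :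
    (incLeftD k m).graph.Adj (hBlk a b T (0, i, j))
      (hBlk (incA' n ℓ a) (fun _ => 1) (incBad k n m ℓ a b T) (1, i, j')) := by
  have hmem : i ∉ incBad k n m ℓ a b T ↔ incGood n m ℓ a b T i := by
    simp [incBad, Set.mem_Icc, hi1, hik]
  by_cases hx : j = a i ∧ i ∉ T
  · by_cases hg : incGood n m ℓ a b T i
    · -- good block: images are (0,i,m), (1,i,1)
      have hbm : b i = m := hg.2.1
      have hj' : j' = incA' n ℓ a i := by
        rcases hdir with ⟨hlt, rfl⟩ | ⟨heq, hjn', hj''⟩ | ⟨hgt, hjn', hj''⟩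
        · simp [incA', hlt, hx.1]
        · have h4 : a i = a ℓ := by rw [heq]
          have haln : a ℓ < n := by have := hx.1; omega
          have e1 : incA' n ℓ a i = a ℓ + 1 := by
            unfold incA'
            rw [if_neg (by omega), if_pos ⟨heq, haln⟩]
          have := hx.1
          omega
        · have e1 : incA' n ℓ a i = 1 := by
            unfold incA'
            rw [if_neg (by omega), if_neg (fun h => by omega)]
          omega
      rw [hBlk_pos a b T 0 i j hx.1 hx.2,
        hBlk_pos (incA' n ℓ a) (fun _ => 1) _ 1 i j' hj' (hmem.mpr hg), hbm]
      exact incLeftD_adj k m i m 1 hi1 hik le_rfl (Or.inl ⟨rfl, rfl⟩)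
    · -- i ∉ T but block not good: then b i < m
      have hbm : b i ≠ m := by
        intro hbm
        apply hg
        refine ⟨hx.2, hbm, ?_⟩
        have hx1 := hx.1
        rcases hdir with ⟨hlt, _⟩ | ⟨heq, hjn', _⟩ | ⟨hgt, hjn', _⟩
        · exact Or.inl hlt
        · refine Or.inr (Or.inl ⟨heq, ?_⟩)
          have h4 : a i = a ℓ := by rw [heq]
          omega
        · exact Or.inr (Or.inr ⟨hgt, by omega⟩)
      have hbltm : b i < m := lt_of_le_of_ne (hwf i hi1 hik).2.2.2 hbm
      have hnm : ¬ (j' = incA' n ℓ a i ∧ i ∉ incBad k n m ℓ a b T) := by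
        rintro ⟨_, hmem'⟩; exact hg (hmem.mp hmem')
      rw [hBlk_pos a b T 0 i j hx.1 hx.2,
        hBlk_neg (incA' n ℓ a) (fun _ => 1) _ 1 i j' hnm]
      exact incLeftD_adj k m i (b i) 0 hi1 hik (le_of_lt hbltm) (Or.inr ⟨hbltm, rfl⟩)
  · -- x-vertex maps to special vertex
    have hnm : ¬ (j' = incA' n ℓ a i ∧ i ∉ incBad k n m ℓ a b T) := by
      rintro ⟨hj', hmem'⟩
      have hg := hmem.mp hmem'
      apply hx
      refine ⟨?_, hg.1⟩
      rcases hdir with ⟨hlt, hj''⟩ | ⟨heq, hjn', hj''⟩ | ⟨hgt, hjn', hj''⟩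
      · have e1 : incA' n ℓ a i = a i := by unfold incA'; rw [if_pos hlt]
        omega
      · have haln : a ℓ < n := by
          rcases hg.2.2 with h | h | h
          · omega
          · exact h.2
          · omega
        have e1 : incA' n ℓ a i = a ℓ + 1 := by
          unfold incA'
          rw [if_neg (by omega), if_pos ⟨heq, haln⟩]
        have h4 : a i = a ℓ := by rw [heq]
        omega
      · have hain : a i = n := by
          rcases hg.2.2 with h | h | h
          · omega
          · omega
          · exact h.2
        omega
    rw [hBlk_neg a b T 0 i j hx, hBlk_neg (incA' n ℓ a) (fun _ => 1) _ 1 i j' hnm]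
    exact incLeftD_adj k m i 0 0 hi1 hik (by omega) (Or.inr ⟨hm, rfl⟩)
lemma inc_left_exists (k n m ℓ : ℕ) (hm : 1 ≤ m)
    (a b : ℕ → ℕ) (T : Set ℕ)
    (hwf : ∀ i, 1 ≤ i → i ≤ k → 1 ≤ a i ∧ a i ≤ n ∧ 1 ≤ b i ∧ b i ≤ m) :
    ∃ H : Set (Finset ((ℕ × ℕ × ℕ) × ℕ × ℕ × ℕ)),
      PebbleCG.IsCriticalStrategy (incLeftS k n ℓ) (incLeftD k m)
        (blkSetS k n) (blkSetD k m) (k + 1) H ∅ ∧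
      PebbleCG.HasBoundaryFun H (blkBdryX k n) (hBlk a b T) ∧
      PebbleCG.HasBoundaryFun H (blkBdryY k n)
        (hBlk (incA' n ℓ a) (fun _ => 1) (incBad k n m ℓ a b T)) := by
  set g := hBlk (incA' n ℓ a) (fun _ => 1) (incBad k n m ℓ a b T) with hg
  apply exists_strategy_of_hom (incLeftS k n ℓ) (incLeftD k m) (blkSetS k n) (blkSetD k m)
    (k + 1) (fun v => if v.1 = 0 then hBlk a b T v else g v)
  · -- maps S into D
    intro x hx
    obtain ⟨hl, hi1, hik, hj1, hjn⟩ := hx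
    by_cases h0 : x.1 = 0
    · rw [if_pos h0]
      rcases hBlk_cases a b T x with h | h <;> rw [h]
      · exact ⟨hl, hi1, hik, (hwf _ hi1 hik).2.2.2⟩
      · exact ⟨hl, hi1, hik, Nat.zero_le m⟩
    · rw [if_neg h0, hg]
      rcases hBlk_cases (incA' n ℓ a) (fun _ => 1) (incBad k n m ℓ a b T) x with h | h <;> rw [h]
      · exact ⟨hl, hi1, hik, hm⟩
      · exact ⟨hl, hi1, hik, Nat.zero_le m⟩
  · -- colors
    intro x
    show (incLeftD k m).color _ = (incLeftS k n ℓ).color x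
    by_cases h0 : x.1 = 0
    · rw [if_pos h0]
      rcases hBlk_cases a b T x with h | h <;> rw [h] <;> rfl
    · rw [if_neg h0, hg]
      rcases hBlk_cases (incA' n ℓ a) (fun _ => 1) (incBad k n m ℓ a b T) x with h | h <;>
        rw [h] <;> rfl
  · -- adjacency
    intro x y hAdj
    simp only [incLeftS, SimpleGraph.fromRel_adj] at hAdj
    obtain ⟨hne, h | h⟩ := hAdj
    · obtain ⟨i, j, j', hi1, hik, hj1, hjn, hj'1, hj'n, rfl, rfl, hdir⟩ := h
      show (incLeftD k m).graph.Adj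
        (if (0, i, j).1 = 0 then hBlk a b T (0, i, j) else g (0, i, j))
        (if (1, i, j').1 = 0 then hBlk a b T (1, i, j') else g (1, i, j'))
      rw [if_pos rfl, if_neg (by simp), hg]
      exact inc_key k n m ℓ hm a b T hwf i j j' hi1 hik hj1 hjn hdir
    · obtain ⟨i, j, j', hi1, hik, hj1, hjn, hj'1, hj'n, rfl, rfl, hdir⟩ := h
      show (incLeftD k m).graph.Adj
        (if (1, i, j').1 = 0 then hBlk a b T (1, i, j') else g (1, i, j'))
        (if (0, i, j).1 = 0 then hBlk a b T (0, i, j) else g (0, i, j))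
      rw [if_pos rfl, if_neg (by simp), hg]
      exact (inc_key k n m ℓ hm a b T hwf i j j' hi1 hik hj1 hjn hdir).symm
  · -- boundary X
    intro z hz
    rw [if_pos hz.1]
  · -- boundary Y
    intro z hz
    have h1 : z.1 = 1 := hz.1
    rw [if_neg (by omega)]
/-- for every configuration `q = (a,b,T)`: if `INC^left_ℓ` is applicable
to `q`, then Duplicator has a winning strategy on `INC^left_ℓ` with boundary function
`h^x_q` on the input block and `h^y_{q⁺}` on the output block; if `INC^left_ℓ` is not
applicable to `q`, then there is an invalid configuration `q_inv` such that Duplicator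
has a winning strategy with boundary function `h^x_q` on the input block and
`h^y_{q_inv}` on the output block. -/
theorem duplicator_strategies_inc_left (k n m ℓ : ℕ) (hk : 2 ≤ k) (hn : 1 ≤ n)
    (hm : 1 ≤ m) (hℓ1 : 1 ≤ ℓ) (hℓk : ℓ ≤ k)
    (a b : ℕ → ℕ) (T : Set ℕ) (hT : T ⊆ Set.Icc 1 k)
    (hwf : ∀ i, 1 ≤ i → i ≤ k → 1 ≤ a i ∧ a i ≤ n ∧ 1 ≤ b i ∧ b i ≤ m) :
    ((T = ∅ ∧ incLeftApplicable k n m ℓ a b) →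
      ∃ H : Set (Finset ((ℕ × ℕ × ℕ) × ℕ × ℕ × ℕ)),
        PebbleCG.IsCriticalStrategy (incLeftS k n ℓ) (incLeftD k m)
          (blkSetS k n) (blkSetD k m) (k + 1) H ∅ ∧
        PebbleCG.HasBoundaryFun H (blkBdryX k n) (hBlk a b T) ∧
        PebbleCG.HasBoundaryFun H (blkBdryY k n) (hBlk (incLeftSucc a ℓ) (fun _ => 1) ∅)) ∧
    (¬ (T = ∅ ∧ incLeftApplicable k n m ℓ a b) →
      ∃ (a' b' : ℕ → ℕ) (T' : Set ℕ), T' ⊆ Set.Icc 1 k ∧ T'.Nonempty ∧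
        (∀ i, 1 ≤ i → i ≤ k → 1 ≤ a' i ∧ a' i ≤ n ∧ 1 ≤ b' i ∧ b' i ≤ m) ∧
        ∃ H : Set (Finset ((ℕ × ℕ × ℕ) × ℕ × ℕ × ℕ)),
          PebbleCG.IsCriticalStrategy (incLeftS k n ℓ) (incLeftD k m)
            (blkSetS k n) (blkSetD k m) (k + 1) H ∅ ∧
          PebbleCG.HasBoundaryFun H (blkBdryX k n) (hBlk a b T) ∧
          PebbleCG.HasBoundaryFun H (blkBdryY k n) (hBlk a' b' T')) := by
  constructor
  · rintro ⟨hTe, happ⟩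
    obtain ⟨H, h1, h2, h3⟩ := inc_left_exists k n m ℓ hm a b T hwf
    refine ⟨H, h1, h2, ?_⟩
    have hbad : incBad k n m ℓ a b T = ∅ := by
      ext i
      simp only [Set.mem_empty_iff_false, iff_false]
      rintro ⟨hng, hmemI⟩
      rw [Set.mem_Icc] at hmemI
      refine hng ⟨by simp [hTe], happ.2.2 i hmemI.1 hmemI.2, ?_⟩
      rcases lt_trichotomy i ℓ with h | h | h
      · exact Or.inl h
      · exact Or.inr (Or.inl ⟨h, happ.1⟩)
      · exact Or.inr (Or.inr ⟨h, happ.2.1 i h hmemI.2⟩)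
    have ha' : incA' n ℓ a = incLeftSucc a ℓ := by
      funext i
      simp only [incA', incLeftSucc]
      rcases lt_trichotomy i ℓ with h | h | h
      · simp [h]
      · subst h
        simp [lt_irrefl, happ.1]
      · have e1 : ¬ i < ℓ := by omega
        have e2 : ¬ (i = ℓ ∧ a ℓ < n) := fun hc => by omega
        have e3 : i ≠ ℓ := by omega
        simp [e1, e2, e3]
    rw [hbad, ha'] at h3
    exact h3
  · intro hnot
    refine ⟨incA' n ℓ a, fun _ => 1, incBad k n m ℓ a b T, fun i hi => hi.2, ?_, ?_,
      inc_left_exists k n m ℓ hm a b T hwf⟩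
    · -- nonempty
      by_cases hTe : T = ∅
      · have happ' : ¬ incLeftApplicable k n m ℓ a b := fun h => hnot ⟨hTe, h⟩
        unfold incLeftApplicable at happ'
        push_neg at happ'
        by_cases h1 : a ℓ < n
        · by_cases h2 : ∀ i, ℓ < i → i ≤ k → a i = n
          · obtain ⟨i, hi1, hik, hbi⟩ := happ' h1 h2
            exact ⟨i, fun hgd => hbi hgd.2.1, Set.mem_Icc.mpr ⟨hi1, hik⟩⟩
          · push_neg at h2
            obtain ⟨i, hlt, hik, hain⟩ := h2
            refine ⟨i, ?_, Set.mem_Icc.mpr ⟨by omega, hik⟩⟩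
            rintro ⟨_, _, h | h | h⟩ <;> omega
        · refine ⟨ℓ, ?_, Set.mem_Icc.mpr ⟨hℓ1, hℓk⟩⟩
          rintro ⟨_, _, h | h | h⟩
          · omega
          · exact h1 h.2
          · omega
      · obtain ⟨i, hi⟩ := Set.nonempty_iff_ne_empty.mpr hTe
        exact ⟨i, fun hgd => hgd.1 hi, hT hi⟩
    · -- bounds
      intro i hi1 hik
      refine ⟨?_, ?_, le_rfl, hm⟩
      · unfold incA'
        split_ifs with h1 h2
        · exact (hwf i hi1 hik).1
        · omega
        · omega
      · unfold incA'
        split_ifs with h1 h2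
        · exact (hwf i hi1 hik).2.1
        · omega
        · exact hn
end
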